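/- arXiv:2211.03095 — 5 statements merged into one kernel-verified Lean document; each statement's English description precedes it below -/
import Mathlib

section
/- Every k-connected graph G on n vertices has a cycle of length at least min{n, 2k}. -/
open SimpleGraph

/-- A set of vertices is cyclable if some cycle of `G` passes through all of them. -/
def Cyclable {V : Type*} (G : SimpleGraph V) (S : Finset V) : Prop :=
  ∃ (v : V) (w : G.Walk v v), w.IsCycle ∧ ∀ x ∈ S, x ∈ w.support

/-- `G` is `k`-cyclable if every set of `k` vertices is cyclable. -/
def KCyclable {V : Type*} (G : SimpleGraph V) (k : ℕ) : Prop :=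
  ∀ S : Finset V, S.card = k → Cyclable G S
/-- `G` is `k`-connected: more than `k` vertices, and removing any `k-1` vertices
leaves the graph connected. -/
def KConnected {V : Type*} [Fintype V] (G : SimpleGraph V) (k : ℕ) : Prop :=
  k < Fintype.card V ∧
    ∀ T : Finset V, T.card ≤ k - 1 → ((⊤ : G.Subgraph).deleteVerts ↑T).coe.Connected

section DiracHelpers

variable {V : Type*} {G : SimpleGraph V}

private lemma end_mem_tail_support' {a b : V} (p : G.Walk a b) (hp : ¬ p.Nil) :
    b ∈ p.support.tail := by
  obtain ⟨u, h, q, rfl⟩ := Walk.not_nil_iff.mp hp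
  simpa using q.end_mem_support

private lemma walk_avoiding' {T : Finset V}
    (hconn : ((⊤ : G.Subgraph).deleteVerts ↑T).coe.Connected)
    {a b : V} (ha : a ∉ T) (hb : b ∉ T) :
    ∃ p : G.Walk a b, ∀ x ∈ p.support, x ∉ T := by
  have ha' : a ∈ ((⊤ : G.Subgraph).deleteVerts ↑T).verts := by simp [ha]
  have hb' : b ∈ ((⊤ : G.Subgraph).deleteVerts ↑T).verts := by simp [hb]
  obtain ⟨p⟩ := hconn ⟨a, ha'⟩ ⟨b, hb'⟩
  refine ⟨p.map (SimpleGraph.Subgraph.hom _), ?_⟩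
  intro x hx
  replace hx : x ∈ (p.map (SimpleGraph.Subgraph.hom _)).support := hx
  rw [Walk.support_map, List.mem_map] at hx
  obtain ⟨⟨x, hx'⟩, -, rfl⟩ := hx
  simp only [Subgraph.deleteVerts_verts, Subgraph.verts_top, Set.mem_diff] at hx'
  exact hx'.2

private lemma exists_cycle_of_kconn [Fintype V] {k : ℕ} (hk : 2 ≤ k) (hG : KConnected G k) :
    ∃ (v : V) (w : G.Walk v v), w.IsCycle := by
  classical
  by_contra hno
  push_neg at hno
  have hac : G.IsAcyclic := fun v w => hno v w
  have hconn : G.Connected := by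
    have h := hG.2 ∅ (by simp)
    have hne : Nonempty V := by
      have : 0 < Fintype.card V := lt_of_le_of_lt (Nat.zero_le _) hG.1
      exact Fintype.card_pos_iff.mp this
    refine ⟨fun a b => ?_⟩
    obtain ⟨p, -⟩ := walk_avoiding' h (by simp) (by simp)
    exact ⟨p⟩
  have htree : G.IsTree := ⟨hconn, hac⟩
  have hcard := htree.card_edgeFinset
  have hdeg : ∀ v : V, 2 ≤ G.degree v := by
    intro v
    by_contra hlt
    push_neg at hlt
    set T := G.neighborFinset v with hT
    have hTcard : T.card ≤ k - 1 := by
      have : T.card = G.degree v := (G.card_neighborFinset_eq_degree v)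
      omega
    have hcT := hG.2 T hTcard
    have hvT : v ∉ T := by simp [hT]
    have hk1 := hG.1
    have hbig : (insert v T).card < Fintype.card V := by
      have h1 : (insert v T).card ≤ T.card + 1 := Finset.card_insert_le _ _
      have : T.card = G.degree v := (G.card_neighborFinset_eq_degree v)
      omega
    have hbex : ∃ b, b ∉ insert v T := by
      by_contra hall
      push_neg at hall
      have : (Finset.univ : Finset V).card ≤ (insert v T).card :=
        Finset.card_le_card (fun z _ => hall z)
      rw [Finset.card_univ] at this
      omega
    obtain ⟨b, hb⟩ := hbex
    have hbv : b ≠ v := fun h => hb (by simp [h])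
    have hbT : b ∉ T := fun h => hb (Finset.mem_insert_of_mem h)
    obtain ⟨p, hp⟩ := walk_avoiding' hcT hvT hbT
    cases p with
    | nil => exact hbv rfl
    | @cons _ m _ hadj q =>
      have hm : m ∉ T := hp m (by simp)
      exact hm (by simp [hT, hadj])
  have hsum : ∑ v : V, G.degree v = 2 * G.edgeFinset.card :=
    G.sum_degrees_eq_twice_card_edges
  have hge : 2 * Fintype.card V ≤ ∑ v : V, G.degree v := by
    calc 2 * Fintype.card V = ∑ _v : V, 2 := by simp [Finset.card_univ, mul_comm]
    _ ≤ ∑ v : V, G.degree v := Finset.sum_le_sum fun v _ => hdeg v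
  omega

private lemma cycle_length_le' [Fintype V] {a : V} (w : G.Walk a a) (hw : w.IsCycle) :
    w.length ≤ Fintype.card V := by
  have h1 : w.support.tail.length ≤ Fintype.card V :=
    hw.support_nodup.length_le_card
  have h2 : w.support.length = w.length + 1 := w.length_support
  have h3 : w.support.tail.length = w.support.length - 1 := by
    simp [List.length_tail]
  omega

private lemma cycle_next' [DecidableEq V] {v x : V} (C : G.Walk v v) (hC : C.IsCycle)
    (hx : x ∈ C.support) :
    ∃ d : G.Dart, d ∈ C.darts ∧ d.fst = x ∧
      ∃ q : G.Walk d.snd d.fst, q.IsPath ∧ q.length + 1 = C.length ∧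
        ∀ z ∈ q.support, z ∈ C.support := by
  have hC' := hC.rotate hx
  have hlen : (C.rotate x hx).length = C.length := by
    have h1 := (C.rotate_darts x hx).perm.length_eq
    rwa [Walk.length_darts, Walk.length_darts] at h1
  obtain ⟨y, h, q, hq⟩ := Walk.not_nil_iff.mp hC'.not_nil
  refine ⟨⟨(x, y), h⟩, ?_, rfl, q, ?_, ?_, ?_⟩
  · have hd : (⟨(x, y), h⟩ : G.Dart) ∈ (C.rotate x hx).darts := by
      rw [hq]; simp [Walk.darts_cons]
    exact ((C.rotate_darts x hx).perm.mem_iff).mp hd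
  · rw [hq] at hC'
    exact ((Walk.cons_isCycle_iff q h).mp hC').1
  · rw [hq, Walk.length_cons] at hlen; omega
  · intro z hz
    have hz' : z ∈ (C.rotate x hx).support.tail := by
      rw [hq, Walk.support_cons]; simpa using hz
    have := ((C.support_rotate x hx).perm.mem_iff).mp hz'
    exact List.mem_of_mem_tail this

private lemma walk_stay' {Hs : Set V} {Cs : List V} {S : Finset V}
    (hclose : ∀ x ∈ Hs, ∀ y, G.Adj x y → y ∉ Cs → y ∈ Hs)
    (hSdef : ∀ x ∈ Hs, ∀ y, G.Adj x y → y ∈ Cs → y ∈ S) :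
    ∀ {a b : V} (p : G.Walk a b), a ∈ Hs → (∀ z ∈ p.support, z ∉ S) → b ∈ Hs := by
  intro a b p
  induction p with
  | nil => exact fun h _ => h
  | @cons a m b hadj p ih =>
    intro ha hS
    by_cases hmC : m ∈ Cs
    · exact absurd (hSdef a ha m hadj hmC) (hS m (by simp))
    · exact ih (hclose a ha m hadj hmC) fun z hz => hS z (by simp [hz])

private lemma cycle_pigeonhole' [DecidableEq V] {v : V} (C : G.Walk v v) (hC : C.IsCycle)
    (S : Finset V) (hsub : ∀ x ∈ S, x ∈ C.support) (hcard : C.length < 2 * S.card) :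
    ∃ d : G.Dart, d ∈ C.darts ∧ d.fst ∈ S ∧ d.snd ∈ S ∧
      ∃ q : G.Walk d.snd d.fst, q.IsPath ∧ q.length + 1 = C.length ∧
        ∀ z ∈ q.support, z ∈ C.support := by
  classical
  by_contra hcon
  push_neg at hcon
  have hch : ∀ x ∈ S, ∃ d : G.Dart, d ∈ C.darts ∧ d.fst = x ∧
      ∃ q : G.Walk d.snd d.fst, q.IsPath ∧ q.length + 1 = C.length ∧
        ∀ z ∈ q.support, z ∈ C.support :=
    fun x hx => cycle_next' C hC (hsub x hx)
  set t := C.support.tail with ht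
  have htlen : t.length = C.length := by
    have := C.length_support
    simp [ht, List.length_tail, this]
  have hnodup : t.Nodup := hC.support_nodup
  have hmemtail : ∀ x ∈ S, x ∈ t.toFinset := by
    intro x hx
    have hx' := hsub x hx
    rw [C.support_eq_cons] at hx'
    rcases List.mem_cons.mp hx' with h | h
    · subst h; exact List.mem_toFinset.mpr (end_mem_tail_support' C hC.not_nil)
    · exact List.mem_toFinset.mpr h
  let f : V → V := fun x => if hx : x ∈ S then (hch x hx).choose.snd else x
  have hfmem : ∀ x ∈ S, f x ∈ t.toFinset \ S := by
    intro x hx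
    obtain ⟨hd, hfst, q, hq1, hq2, hq3⟩ := (hch x hx).choose_spec
    have hsnd : f x = (hch x hx).choose.snd := by simp [f, hx]
    refine Finset.mem_sdiff.mpr ⟨?_, ?_⟩
    · rw [List.mem_toFinset, ht, ← C.map_snd_darts]
      rw [hsnd]
      exact List.mem_map_of_mem hd
    · intro hfS
      obtain ⟨z, hz1, hz2⟩ := hcon (hch x hx).choose hd (hfst.symm ▸ hx) (hsnd ▸ hfS) q hq1 hq2
      exact hz2 (hq3 z hz1)
  have hinj : Set.InjOn f S := by
    intro x1 h1' x2 h2' heq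
    have h1 : x1 ∈ S := Finset.mem_coe.mp h1'
    have h2 : x2 ∈ S := Finset.mem_coe.mp h2'
    obtain ⟨hd1, hfst1, -⟩ := (hch x1 h1).choose_spec
    obtain ⟨hd2, hfst2, -⟩ := (hch x2 h2).choose_spec
    have hnodupsnd : (C.darts.map (·.snd)).Nodup := by
      rw [C.map_snd_darts]; exact hnodup
    have e1 : f x1 = (hch x1 h1).choose.snd := by simp [f, h1]
    have e2 : f x2 = (hch x2 h2).choose.snd := by simp [f, h2]
    have : (hch x1 h1).choose = (hch x2 h2).choose := by
      apply List.inj_on_of_nodup_map hnodupsnd hd1 hd2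
      rw [← e1, ← e2, heq]
    rw [← hfst1, ← hfst2, this]
  have hle : S.card ≤ (t.toFinset \ S).card :=
    Finset.card_le_card_of_injOn f hfmem hinj
  have hsd : (t.toFinset \ S).card = t.toFinset.card - S.card :=
    Finset.card_sdiff_of_subset (fun x hx => hmemtail x hx)
  have htf : t.toFinset.card = C.length := by
    rw [List.toFinset_card_of_nodup hnodup, htlen]
  omega

end DiracHelpers

theorem kConnected_circumference {V : Type*} [Fintype V] (G : SimpleGraph V) (k : ℕ)
    (hk : 2 ≤ k) (hG : KConnected G k) :
    ∃ (v : V) (w : G.Walk v v), w.IsCycle ∧ min (Fintype.card V) (2 * k) ≤ w.length := by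
  classical
  obtain ⟨v0, w0, hw0⟩ := exists_cycle_of_kconn hk hG
  set n := Fintype.card V with hn
  set P : ℕ → Prop := fun l => ∃ (a : V) (w : G.Walk a a), w.IsCycle ∧ w.length = l with hP
  have hPmax : P (Nat.findGreatest P n) :=
    Nat.findGreatest_spec (cycle_length_le' w0 hw0) ⟨v0, w0, hw0, rfl⟩
  set c := Nat.findGreatest P n with hc
  obtain ⟨v, C, hC, hClen⟩ := hPmax
  have hmax : ∀ (a : V) (w : G.Walk a a), w.IsCycle → w.length ≤ c :=
    fun a w hw => Nat.le_findGreatest (cycle_length_le' w hw) ⟨a, w, hw, rfl⟩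
  by_cases hdone : min n (2 * k) ≤ c
  · exact ⟨v, C, hC, hClen ▸ hdone⟩
  push_neg at hdone
  exfalso
  have hc3 : 3 ≤ c := hClen ▸ hC.three_le_length
  have hcn : c < n := lt_of_lt_of_le hdone (min_le_left _ _)
  have hck : c < 2 * k := lt_of_lt_of_le hdone (min_le_right _ _)
  have htailcard : C.support.tail.toFinset.card = c := by
    rw [List.toFinset_card_of_nodup hC.support_nodup]
    have h1 := C.length_support
    simp [List.length_tail, h1, hClen]
  -- a vertex outside the longest cycle
  have hexu : ∃ u, u ∉ C.support := by
    by_contra hall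
    push_neg at hall
    have hsubu : (Finset.univ : Finset V) ⊆ C.support.tail.toFinset := by
      intro z _
      have hz := hall z
      rw [C.support_eq_cons] at hz
      rcases List.mem_cons.mp hz with h | h
      · subst h; exact List.mem_toFinset.mpr (end_mem_tail_support' C hC.not_nil)
      · exact List.mem_toFinset.mpr h
    have h1 : n ≤ C.support.tail.toFinset.card := by
      rw [hn, ← Finset.card_univ]; exact Finset.card_le_card hsubu
    omega
  obtain ⟨u, hu⟩ := hexu
  -- the component of u outside C
  set Hs : Set V := {x | ∃ p : G.Walk u x, ∀ y ∈ p.support, y ∉ C.support} with hHs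
  have huH : u ∈ Hs := ⟨Walk.nil, by simpa using hu⟩
  have hHC : ∀ x ∈ Hs, x ∉ C.support := by
    rintro x ⟨p, hp⟩; exact hp x p.end_mem_support
  have hclose : ∀ x ∈ Hs, ∀ y, G.Adj x y → y ∉ C.support → y ∈ Hs := by
    rintro x ⟨p, hp⟩ y hadj hy
    refine ⟨p.concat hadj, ?_⟩
    intro z hz
    rw [Walk.support_concat] at hz
    rw [List.mem_append] at hz
    simp only [List.mem_singleton] at hz
    rcases hz with h | h
    · exact hp z h
    · exact h ▸ hy
  -- attachment set
  set S : Finset V := Finset.univ.filter (fun z => z ∈ C.support ∧ ∃ h ∈ Hs, G.Adj z h)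
    with hSdef
  have hSsub : ∀ x ∈ S, x ∈ C.support := fun x hx => ((Finset.mem_filter.mp hx).2).1
  have hSadj : ∀ x ∈ S, ∃ h ∈ Hs, G.Adj x h := fun x hx => ((Finset.mem_filter.mp hx).2).2
  have hSmem : ∀ x ∈ Hs, ∀ y, G.Adj x y → y ∈ C.support → y ∈ S := by
    intro x hx y hadj hy
    exact Finset.mem_filter.mpr ⟨Finset.mem_univ y, hy, x, hx, hadj.symm⟩
  -- the attachment set is large
  have hS2 : C.length < 2 * S.card := by
    rw [hClen]
    by_cases hall : ∀ z ∈ C.support, z ∈ S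
    · have hsubS : C.support.tail.toFinset ⊆ S := fun z hz =>
        hall z (List.mem_of_mem_tail (List.mem_toFinset.mp hz))
      have h1 : c ≤ S.card := htailcard ▸ Finset.card_le_card hsubS
      omega
    · push_neg at hall
      obtain ⟨z, hzC, hzS⟩ := hall
      have hkS : k ≤ S.card := by
        by_contra hlt
        push_neg at hlt
        have hconn := hG.2 S (by omega)
        have huS : u ∉ S := fun h => hu (hSsub u h)
        obtain ⟨p, hp⟩ := walk_avoiding' hconn huS hzS
        have := walk_stay' hclose hSmem p huH hp
        exact (hHC z this) hzC
      omega
  -- two consecutive attachment vertices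
  obtain ⟨d, hd, hdf, hds, q, hqpath, hqlen, hqsub⟩ := cycle_pigeonhole' C hC S hSsub hS2
  obtain ⟨x', hx'H, hxx'⟩ := hSadj _ hdf
  obtain ⟨y', hy'H, hyy'⟩ := hSadj _ hds
  have hx'C : x' ∉ C.support := hHC x' hx'H
  have hy'C : y' ∉ C.support := hHC y' hy'H
  -- a path from x' to y' inside the component
  obtain ⟨p1, hp1⟩ := hx'H
  obtain ⟨p2, hp2⟩ := hy'H
  set r0 : G.Walk x' y' := p1.reverse.append p2 with hr0
  have hr0avoid : ∀ z ∈ r0.support, z ∉ C.support := by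
    intro z hz
    rw [hr0, Walk.mem_support_append_iff] at hz
    rcases hz with h | h
    · exact hp1 z (by rwa [Walk.support_reverse, List.mem_reverse] at h)
    · exact hp2 z h
  set r := r0.bypass with hr
  have hrpath : r.IsPath := r0.bypass_isPath
  have hravoid : ∀ z ∈ r.support, z ∉ C.support := fun z hz =>
    hr0avoid z (r0.support_bypass_subset hz)
  -- build the longer cycle
  set R : G.Walk x' d.fst := r.append (Walk.cons hyy'.symm q) with hR
  have hRsupp : R.support = r.support ++ q.support := by
    rw [hR, Walk.support_append, Walk.support_cons, List.tail_cons]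
  have hRpath : R.IsPath := by
    rw [Walk.isPath_def, hRsupp]
    refine List.Nodup.append hrpath.support_nodup hqpath.support_nodup ?_
    rw [List.disjoint_left]
    intro z hz1 hz2
    exact hravoid z hz1 (hqsub z hz2)
  have hRedge : s(d.fst, x') ∉ R.edges := by
    rw [hR, Walk.edges_append, Walk.edges_cons]
    intro hmem
    rcases List.mem_append.mp hmem with h | h
    · exact hravoid d.fst (r.fst_mem_support_of_mem_edges h) (hSsub _ hdf)
    · rcases List.mem_cons.mp h with h | h
      · rw [Sym2.eq_iff] at h
        rcases h with ⟨h1, h2⟩ | ⟨h1, h2⟩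
        · exact hy'C (h1 ▸ hSsub _ hdf)
        · exact (G.ne_of_adj d.adj) h1
      · exact hx'C (hqsub x' (Walk.snd_mem_support_of_mem_edges q h))
  have hWcycle : (Walk.cons hxx' R).IsCycle :=
    (Walk.cons_isCycle_iff R hxx').mpr ⟨hRpath, hRedge⟩
  have hWlen : (Walk.cons hxx' R).length = r.length + q.length + 2 := by
    rw [Walk.length_cons, hR, Walk.length_append, Walk.length_cons]
    omega
  have hle := hmax _ _ hWcycle
  rw [hWlen] at hle
  rw [hClen] at hqlen
  omega
end

section
/- If G is a k-connected graph of order n ≥ 2(k²+k) with more than C(n−k,2) + k² edges, then G is hamiltonian. -/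
open SimpleGraph Finset
set_option linter.unusedSectionVars false
set_option maxHeartbeats 1000000

namespace HamAux

variable {V : Type*} [Fintype V] [DecidableEq V]


lemma getVert_mem_support {G : SimpleGraph V} {u v : V} (p : G.Walk u v) (i : ℕ) :
    p.getVert i ∈ p.support := by
  rcases le_or_gt i p.length with h | h
  · exact Walk.mem_support_iff_exists_getVert.mpr ⟨i, rfl, h⟩
  · rw [p.getVert_of_length_le h.le]; exact p.end_mem_support

/-- getVert is injective on paths. -/
lemma getVert_injOn {G : SimpleGraph V} {u v : V} (p : G.Walk u v) (hp : p.IsPath) :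
    ∀ i ≤ p.length, ∀ j ≤ p.length, p.getVert i = p.getVert j → i = j := by
  induction p with
  | nil => intro i hi j hj _; simp at hi hj; omega
  | cons h q ih =>
    rename_i a b c
    rw [SimpleGraph.Walk.cons_isPath_iff] at hp
    intro i hi j hj hij
    match i, j with
    | 0, 0 => rfl
    | 0, j+1 =>
      exfalso
      simp only [Walk.getVert_zero, Walk.getVert_cons_succ] at hij
      exact hp.2 (by rw [hij]; exact getVert_mem_support q j)
    | i+1, 0 =>
      exfalso
      simp only [Walk.getVert_zero, Walk.getVert_cons_succ] at hij
      exact hp.2 (by rw [← hij]; exact getVert_mem_support q i)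
    | i+1, j+1 =>
      simp only [Walk.length_cons, add_le_add_iff_right] at hi hj
      simp only [Walk.getVert_cons_succ] at hij
      exact congrArg (· + 1) (ih hp.1 i hi j hj hij)


/-- Split a walk at position `i`. -/
lemma walk_split {G : SimpleGraph V} {u v : V} (p : G.Walk u v) :
    ∀ i, i < p.length →
      ∃ (q : G.Walk u (p.getVert i)) (r : G.Walk (p.getVert (i+1)) v),
        q.support ++ r.support = p.support := by
  induction p with
  | nil => intro i hi; simp at hi
  | cons h q ih =>
    rename_i a b c
    intro i hi
    match i with
    | 0 =>
      refine ⟨Walk.nil.copy rfl ((Walk.cons h q).getVert_zero).symm,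
        q.copy (q.getVert_zero).symm rfl, ?_⟩
      simp
    | i+1 =>
      simp only [Walk.length_cons, add_lt_add_iff_right] at hi
      obtain ⟨q', r', hs⟩ := ih i hi
      exact ⟨Walk.cons h q', r', by simpa using hs⟩


/-- The rotation argument: from a hamiltonian path `u → v` and an index `i` such that
`u ~ p_{i+1}` and `v ~ p_i`, we get a hamiltonian cycle. -/
lemma rotation {H : SimpleGraph V} {u v : V} (p : H.Walk u v) (hp : p.IsHamiltonian)
    (hne : u ≠ v) (huv : ¬H.Adj u v) {i : ℕ} (hi : i < p.length)
    (ha : H.Adj u (p.getVert (i+1))) (hb : H.Adj v (p.getVert i)) :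
    H.IsHamiltonian := by
  obtain ⟨q, r, hsup⟩ := walk_split p i hi
  set w : H.Walk (p.getVert (i+1)) u := r.append (Walk.cons hb q.reverse) with hw
  have hwsup : w.support = r.support ++ q.support.reverse := by
    rw [hw, Walk.support_append, Walk.support_cons, List.tail_cons, Walk.support_reverse]
  have hperm : List.Perm w.support p.support := by
    rw [hwsup, ← hsup]
    exact List.perm_append_comm.trans ((q.support.reverse_perm).append_right _)
  have hpnodup : p.support.Nodup := hp.isPath.support_nodup
  have hwnodup : w.support.Nodup := hperm.nodup_iff.mpr hpnodup
  have hdisj : ∀ z, z ∈ q.support → z ∉ r.support := by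
    intro z hz hz'
    have hnd : (q.support ++ r.support).Nodup := by rw [hsup]; exact hpnodup
    exact (List.disjoint_of_nodup_append hnd) hz hz'
  have hwpath : w.IsPath := Walk.IsPath.mk' hwnodup
  have hedge : s(u, p.getVert (i+1)) ∉ w.edges := by
    rw [hw, Walk.edges_append, Walk.edges_cons]
    intro hmem
    rcases List.mem_append.mp hmem with h1 | h2
    · exact hdisj u q.start_mem_support (Walk.fst_mem_support_of_mem_edges r h1)
    · rcases List.mem_cons.mp h2 with h3 | h4
      · rw [Sym2.eq_iff] at h3
        rcases h3 with ⟨h5, _⟩ | ⟨h5, hyv⟩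
        · exact hne h5
        · exact huv (hyv ▸ ha)
      · rw [Walk.edges_reverse, List.mem_reverse] at h4
        exact hdisj _ (Walk.snd_mem_support_of_mem_edges q h4) r.start_mem_support
  have hcyc : (Walk.cons ha w).IsCycle := (Walk.cons_isCycle_iff w ha).mpr ⟨hwpath, hedge⟩
  have hcov : ∀ z, z ∈ w.support := fun z => hperm.mem_iff.mpr (hp.mem_support z)
  have hham : (Walk.cons ha w).IsHamiltonianCycle := by
    refine Walk.isHamiltonianCycle_isCycle_and_isHamiltonian_tail.mpr ⟨hcyc, ?_⟩
    intro z
    rw [Walk.support_tail_of_not_nil _ (by simp), Walk.support_cons, List.tail_cons]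
    exact (hwpath.isHamiltonian_of_mem hcov) z
  exact fun _ => ⟨u, Walk.cons ha w, hham⟩


lemma loop_path_nil {G : SimpleGraph V} {y : V} (q : G.Walk y y) (h : q.IsPath) : q = Walk.nil := by
  cases q with
  | nil => rfl
  | cons h' q' =>
    rw [Walk.cons_isPath_iff] at h
    exact absurd q'.end_mem_support h.2

lemma exists_concat_of_mem_edges {G : SimpleGraph V} {x y z : V} (q : G.Walk x y)
    (hq : q.IsPath) (he : s(z, y) ∈ q.edges) :
    ∃ (q' : G.Walk x z) (h : G.Adj z y), q = q'.concat h := by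
  induction q with
  | nil => simp at he
  | cons h₁ q₁ ih =>
    rename_i a b
    rw [Walk.cons_isPath_iff] at hq
    rw [Walk.edges_cons, List.mem_cons] at he
    rcases he with he | he
    · rw [Sym2.eq_iff] at he
      rcases he with ⟨rfl, rfl⟩ | ⟨rfl, rfl⟩
      · have : q₁ = Walk.nil := loop_path_nil q₁ hq.1
        subst this
        exact ⟨Walk.nil, h₁, rfl⟩
      · exact absurd q₁.end_mem_support hq.2
    · obtain ⟨q₂, h₂, rfl⟩ := ih hq.1 he
      exact ⟨Walk.cons h₁ q₂, h₂, by rw [Walk.concat_cons]⟩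

lemma top_isHamiltonian (h3 : 3 ≤ Fintype.card V) : (⊤ : SimpleGraph V).IsHamiltonian := by
  intro _
  -- build a cycle from the list of all vertices
  have hex : ∀ (l : List V) (a b : V), (a :: l ++ [b]).Nodup →
      ∃ w : (⊤ : SimpleGraph V).Walk a b, w.support = a :: l ++ [b] := by
    intro l
    induction l with
    | nil =>
      intro a b hnd
      simp at hnd
      exact ⟨Walk.cons (by simpa using hnd) Walk.nil, by simp⟩
    | cons c l ih =>
      intro a b hnd
      simp only [List.cons_append, List.nodup_cons, List.mem_cons] at hnd
      obtain ⟨w', hw'⟩ := ih c b (by simpa using hnd.2)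
      have hac : a ≠ c := fun h => hnd.1 (Or.inl h)
      refine ⟨Walk.cons (by simpa using hac) w', by simp [hw']⟩
  obtain ⟨L, hL⟩ : ∃ L : List V, L = Finset.univ.toList := ⟨_, rfl⟩
  have hLnd : L.Nodup := hL ▸ Finset.nodup_toList _
  have hLlen : 3 ≤ L.length := by
    rw [hL, Finset.length_toList, Finset.card_univ]; exact h3
  have hLmem : ∀ x : V, x ∈ L := by intro x; rw [hL]; simp
  match L, hLnd, hLlen, hLmem with
  | a :: b :: rest, hLnd, hLlen, hLmem =>
    have hrest : rest ≠ [] := by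
      intro h; rw [h] at hLlen; simp at hLlen
    simp only [List.nodup_cons, List.mem_cons] at hLnd
    have hnd2 : (b :: rest ++ [a]).Nodup := by
      have hperm : List.Perm (b :: rest ++ [a]) (a :: b :: rest) := by
        have := List.perm_append_comm (l₁ := b :: rest) (l₂ := [a])
        simpa using this
      rw [hperm.nodup_iff]
      simp only [List.nodup_cons, List.mem_cons]
      exact ⟨fun h => hLnd.1 h, hLnd.2⟩
    obtain ⟨w, hwsup⟩ := hex rest b a hnd2
    have hab : a ≠ b := fun h => hLnd.1 (Or.inl h)
    have hwpath : w.IsPath := Walk.IsPath.mk' (by rw [hwsup]; exact hnd2)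
    have hedge : s(a, b) ∉ w.edges := by
      intro hmem
      rw [Sym2.eq_swap] at hmem
      obtain ⟨w₂, h₂, heq⟩ := exists_concat_of_mem_edges w hwpath hmem
      have : w.support = w₂.support ++ [a] := by
        rw [heq, Walk.support_concat]
      have hw2path : w₂.IsPath := Walk.IsPath.mk' (by
        have hnd3 : (w₂.support ++ [a]).Nodup := by rw [← this, hwsup]; exact hnd2
        exact (List.nodup_append.mp hnd3).1)
      have : w₂ = Walk.nil := loop_path_nil w₂ hw2path
      rw [this] at heq
      rw [heq] at hwsup
      simp only [Walk.concat_nil, Walk.support_cons, Walk.support_nil] at hwsup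
      apply hrest
      cases rest with
      | nil => rfl
      | cons r rs => simp at hwsup
    have hcyc : (Walk.cons (by simp [hab] : (⊤ : SimpleGraph V).Adj a b) w).IsCycle :=
      (Walk.cons_isCycle_iff w _).mpr ⟨hwpath, hedge⟩
    refine ⟨a, Walk.cons _ w, Walk.isHamiltonianCycle_isCycle_and_isHamiltonian_tail.mpr
      ⟨hcyc, ?_⟩⟩
    intro z
    rw [Walk.support_tail_of_not_nil _ (by simp), Walk.support_cons, List.tail_cons]
    refine (hwpath.isHamiltonian_of_mem ?_) z
    intro x
    rw [hwsup]
    have := hLmem x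
    simp only [List.mem_cons] at this
    rcases this with rfl | rfl | hx <;> simp_all



/-- From a hamiltonian cycle in `H ⊔ edge u v` (where `H` itself is not hamiltonian),
extract a hamiltonian path from `u` to `v` in `H`. -/
lemma exists_hamiltonian_path {H : SimpleGraph V} {u v : V} (hne : u ≠ v)
    (hnadj : ¬H.Adj u v) (hHam : (H ⊔ edge u v).IsHamiltonian)
    (hcard : Fintype.card V ≠ 1) (hH : ¬H.IsHamiltonian) :
    ∃ p : H.Walk u v, p.IsHamiltonian := by
  obtain ⟨a, c, hc⟩ := hHam hcard
  have hedgeSet : (H ⊔ edge u v).edgeSet = H.edgeSet ∪ {s(u, v)} := by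
    rw [edgeSet_sup, edge_edgeSet_of_ne hne]
  have hmemH : ∀ e ∈ (H ⊔ edge u v).edgeSet, e ≠ s(u, v) → e ∈ H.edgeSet := by
    intro e he hne'
    rw [hedgeSet] at he
    rcases he with he | he
    · exact he
    · exact absurd he hne'
  by_cases he : s(u, v) ∈ c.edges
  · -- rotate the cycle to start at u
    have hu : u ∈ c.support := hc.mem_support u
    have hrot : (c.rotate u hu).IsHamiltonianCycle := by
      rw [Walk.isHamiltonianCycle_iff_isCycle_and_support_count_tail_eq_one]
      refine ⟨hc.isCycle.rotate hu, fun z => ?_⟩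
      rw [(Walk.support_rotate c u hu).perm.count_eq]
      exact (Walk.isHamiltonianCycle_iff_isCycle_and_support_count_tail_eq_one.mp hc).2 z
    have hrot_e : s(u, v) ∈ (c.rotate u hu).edges :=
      (Walk.rotate_edges c u hu).perm.mem_iff.mpr he
    obtain ⟨b, h₁, q, heq⟩ := Walk.not_nil_iff.mp hrot.isCycle.not_nil
    rw [heq] at hrot hrot_e
    have hqpe := (Walk.cons_isCycle_iff q h₁).mp hrot.isCycle
    have hqpath : q.IsPath := hqpe.1
    have hcov : ∀ x, x ∈ q.support := by
      intro x
      have := hrot.mem_support x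
      rw [Walk.support_cons, List.mem_cons] at this
      rcases this with rfl | hx
      · exact q.end_mem_support
      · exact hx
    by_cases hbv : v = b
    · subst hbv
      -- first edge is s(u,v); the rest of the cycle is a ham path from v to u in H
      have hqH : ∀ e ∈ q.edges, e ∈ H.edgeSet := by
        intro e heq'
        refine hmemH e (Walk.edges_subset_edgeSet q heq') (fun h => ?_)
        rw [h] at heq'
        exact hqpe.2 heq'
      refine ⟨(q.transfer H hqH).reverse, ?_⟩
      refine Walk.IsPath.isHamiltonian_of_mem ((Walk.IsPath.mk' ?_).reverse) ?_
      · rw [Walk.support_transfer]; exact hqpath.support_nodup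
      · intro x
        rw [Walk.support_reverse, List.mem_reverse, Walk.support_transfer]
        exact hcov x
    · -- the edge s(u,v) is inside q; it must be its last edge.
      have hqe : s(v, u) ∈ q.edges := by
        rw [Walk.edges_cons, List.mem_cons] at hrot_e
        rcases hrot_e with h' | h'
        · rw [Sym2.eq_iff] at h'
          rcases h' with ⟨_, h''⟩ | ⟨_, h''⟩
          · exact absurd h'' hbv
          · exact absurd h''.symm hne
        · rwa [Sym2.eq_swap] at h'
      obtain ⟨q₂, h₂, rfl⟩ := exists_concat_of_mem_edges q hqpath hqe
      have hq2sup : (q₂.concat h₂).support = q₂.support ++ [u] := by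
        rw [Walk.support_concat]
      have hnd := hqpath.support_nodup
      rw [hq2sup] at hnd
      have hq2nd := List.nodup_append.mp hnd
      -- edges of q₂ don't contain s(u,v)
      have hvu_notin : s(v, u) ∉ q₂.edges := by
        have := hqpath.isTrail.edges_nodup
        rw [Walk.edges_concat, List.concat_eq_append] at this
        have := List.disjoint_of_nodup_append this
        intro h'
        exact this h' (List.mem_singleton_self _)
      -- the walk  u -> b -> ... -> v  lives in H
      have hallH : ∀ e ∈ (Walk.cons h₁ q₂).edges, e ∈ H.edgeSet := by
        intro e he'
        rw [Walk.edges_cons, List.mem_cons] at he'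
        rcases he' with rfl | he'
        · refine hmemH _ ((Walk.cons h₁ (q₂.concat h₂)).edges_subset_edgeSet (by simp)) ?_
          intro h'
          rw [Sym2.eq_iff] at h'
          rcases h' with ⟨_, h''⟩ | ⟨h'', _⟩
          · exact hbv h''.symm
          · exact hne h''
        · refine hmemH _ ((q₂.concat h₂).edges_subset_edgeSet (by rw [Walk.edges_concat, List.concat_eq_append]; exact List.mem_append_left _ he')) ?_
          intro h'
          rw [h', Sym2.eq_swap] at he'
          exact hvu_notin he'
      refine ⟨(Walk.cons h₁ q₂).transfer H hallH, ?_⟩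
      refine Walk.IsPath.isHamiltonian_of_mem (Walk.IsPath.mk' ?_) ?_
      · rw [Walk.support_transfer, Walk.support_cons]
        exact List.nodup_cons.mpr ⟨fun h => hq2nd.2.2 u h u (List.mem_singleton_self _) rfl, hq2nd.1⟩
      · intro x
        rw [Walk.support_transfer, Walk.support_cons, List.mem_cons]
        have := hcov x
        rw [hq2sup, List.mem_append, List.mem_singleton] at this
        tauto
  · -- cycle avoids s(u,v): transfer to H, contradiction
    exfalso
    have hall : ∀ e ∈ c.edges, e ∈ H.edgeSet := by
      intro e he'
      exact hmemH e (c.edges_subset_edgeSet he') (fun h => he (h ▸ he'))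
    refine hH (fun _ => ⟨a, c.transfer H hall, ?_⟩)
    rw [Walk.isHamiltonianCycle_iff_isCycle_and_support_count_tail_eq_one]
    refine ⟨hc.isCycle.transfer hall, fun z => ?_⟩
    rw [Walk.support_transfer]
    exact (Walk.isHamiltonianCycle_iff_isCycle_and_support_count_tail_eq_one.mp hc).2 z


lemma exists_maximal_nonham (G : SimpleGraph V) (hG : ¬G.IsHamiltonian) :
    ∃ H, G ≤ H ∧ ¬H.IsHamiltonian ∧ ∀ H', H < H' → H'.IsHamiltonian := by
  have key : ∀ m (X : SimpleGraph V), ¬X.IsHamiltonian →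
      (Fintype.card V).choose 2 ≤ X.edgeSet.ncard + m →
      ∃ H, X ≤ H ∧ ¬H.IsHamiltonian ∧ ∀ H', H < H' → H'.IsHamiltonian := by
    intro m
    induction m with
    | zero =>
      intro X hX hle
      refine ⟨X, le_rfl, hX, fun H' hH' => ?_⟩
      by_contra h'
      letI := Classical.decRel X.Adj
      letI := Classical.decRel H'.Adj
      have h1 : X.edgeSet.ncard < H'.edgeSet.ncard := by
        apply Set.ncard_lt_ncard _ H'.edgeSet.toFinite
        exact (edgeSet_ssubset_edgeSet).mpr hH'
      have h2 : H'.edgeSet.ncard ≤ (Fintype.card V).choose 2 := by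
        rw [Set.ncard_eq_toFinset_card' H'.edgeSet]
        exact card_edgeFinset_le_card_choose_two
      omega
    | succ m ih =>
      intro X hX hle
      by_cases hmax : ∀ H', X < H' → H'.IsHamiltonian
      · exact ⟨X, le_rfl, hX, hmax⟩
      · push_neg at hmax
        obtain ⟨H', hlt, hH'⟩ := hmax
        obtain ⟨H, h1, h2, h3⟩ := ih H' hH' (by
          have : X.edgeSet.ncard < H'.edgeSet.ncard := by
            apply Set.ncard_lt_ncard _ H'.edgeSet.toFinite
            exact (edgeSet_ssubset_edgeSet).mpr hlt
          omega)
        exact ⟨H, hlt.le.trans h1, h2, h3⟩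
  exact key ((Fintype.card V).choose 2) G hG (by omega)

lemma degree_mono {G H : SimpleGraph V} [DecidableRel G.Adj] [DecidableRel H.Adj]
    (hGH : G ≤ H) (x : V) : G.degree x ≤ H.degree x := by
  apply Finset.card_le_card
  intro y hy
  rw [mem_neighborFinset] at hy ⊢
  exact hGH hy

/-- In a `k`-connected graph every vertex has degree at least `k`. -/
lemma kconn_min_degree {G : SimpleGraph V} [DecidableRel G.Adj] {k : ℕ}
    (hG : KConnected G k) (x : V) : k ≤ G.degree x := by
  by_contra hlt
  push_neg at hlt
  set T := G.neighborFinset x with hT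
  have hTcard : T.card ≤ k - 1 := by
    have h := G.card_neighborFinset_eq_degree x
    rw [← hT] at h
    omega
  have hconn := hG.2 T hTcard
  -- x is a vertex of the subgraph
  have hxT : x ∉ T := by simp [hT]
  have hx : x ∈ ((⊤ : G.Subgraph).deleteVerts ↑T).verts := by
    simp [Subgraph.deleteVerts_verts, hxT]
  -- there is a vertex y ∉ T ∪ {x}
  obtain ⟨y, hy⟩ : ∃ y, y ∉ insert x T := by
    by_contra hall
    push_neg at hall
    have : (Finset.univ : Finset V) ⊆ insert x T := fun z _ => hall z
    have hcard := Finset.card_le_card this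
    rw [Finset.card_univ] at hcard
    have := Finset.card_insert_le x T
    have := hG.1
    omega
  have hyT : y ∉ T := fun h => hy (Finset.mem_insert_of_mem h)
  have hyx : y ≠ x := fun h => hy (h ▸ Finset.mem_insert_self _ _)
  have hy' : y ∈ ((⊤ : G.Subgraph).deleteVerts ↑T).verts := by
    simp [Subgraph.deleteVerts_verts, hyT]
  obtain ⟨w⟩ := hconn.preconnected ⟨x, hx⟩ ⟨y, hy'⟩
  have hnn : ¬w.Nil := Walk.not_nil_of_ne (fun h => hyx (congrArg Subtype.val h).symm)
  have hadj := w.adj_snd hnn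
  have h' := hadj
  rw [Subgraph.coe_adj] at h'
  rw [Subgraph.deleteVerts_adj] at h'
  have hadjG : G.Adj x ((w.getVert 1 : _) : V) := h'.2.2.2.2
  have hnotT : ((w.getVert 1 : _) : V) ∉ (T : Set V) := h'.2.2.2.1
  exact hnotT (Finset.mem_coe.mpr ((G.mem_neighborFinset x _).mpr hadjG))


lemma two_mul_choose_two (m : ℕ) : 2 * m.choose 2 = m * (m - 1) := by
  induction m with
  | zero => rfl
  | succ m ih =>
    rw [Nat.choose_succ_succ, Nat.mul_add, ih, Nat.choose_one_right]
    cases m with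
    | zero => rfl
    | succ m =>
      simp only [Nat.succ_sub_one, Nat.add_sub_cancel]
      ring

lemma arith {k d n : ℕ} (hk : 1 ≤ k) (hkd : k ≤ d) (hdn : 2 * d + 1 ≤ n)
    (hn : 2 * (k ^ 2 + k) ≤ n) :
    (n - d).choose 2 + d * d ≤ (n - k).choose 2 + k ^ 2 := by
  have hdn' : d ≤ n := by omega
  have hkn : k ≤ n := by omega
  have key : (n - d) * (n - d - 1) + 2 * (d * d) ≤ (n - k) * (n - k - 1) + 2 * k ^ 2 := by
    have hd3 : d + 3 * k ≤ n ∨ d = k := by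
      rcases Nat.eq_or_lt_of_le hkd with h | h
      · right; omega
      · left
        rcases le_or_gt (3 * k) d with h2 | h2
        · omega
        · nlinarith
    rcases hd3 with hd3 | rfl
    · zify [hdn', hkn, show 1 ≤ n - d by omega, show 1 ≤ n - k by omega]
      nlinarith [mul_nonneg (by omega : (0:ℤ) ≤ (d:ℤ) - k)
        (by omega : (0:ℤ) ≤ 2 * (n:ℤ) - 3 * d - 3 * k - 1)]
    · simp [pow_two]
  have h1 := two_mul_choose_two (n - d)
  have h2 := two_mul_choose_two (n - k)
  omega

/-- Counting: if there are `d` vertices of degree at most `d`, the number of edges is at most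
`C(n-d, 2) + d*d`. -/
lemma count_bound (H : SimpleGraph V) [DecidableRel H.Adj] (S : Finset V) (d : ℕ)
    (hSd : S.card = d) (hdeg : ∀ w ∈ S, H.degree w ≤ d) :
    H.edgeFinset.card ≤ (Fintype.card V - d).choose 2 + d * d := by
  classical
  set P : Sym2 V → Prop := fun e => ∀ x ∈ e, x ∉ S with hP
  have hsplit := Finset.card_filter_add_card_filter_not
    (s := H.edgeFinset) (p := P)
  -- edges touching S
  have h2 : (H.edgeFinset.filter (fun e => ¬P e)).card ≤ d * d := by
    have hsub : H.edgeFinset.filter (fun e => ¬P e) ⊆ S.biUnion (fun w => H.incidenceFinset w) := by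
      intro e he
      rw [Finset.mem_filter] at he
      have hne := he.2
      simp only [hP] at hne
      push_neg at hne
      obtain ⟨x, hx, hxS⟩ := hne
      refine Finset.mem_biUnion.mpr ⟨x, hxS, ?_⟩
      rw [mem_incidenceFinset]
      exact ⟨(mem_edgeFinset.mp he.1 : _), hx⟩
    calc (H.edgeFinset.filter (fun e => ¬P e)).card
        ≤ (S.biUnion (fun w => H.incidenceFinset w)).card := Finset.card_le_card hsub
      _ ≤ ∑ w ∈ S, (H.incidenceFinset w).card := Finset.card_biUnion_le
      _ ≤ ∑ w ∈ S, d := Finset.sum_le_sum (fun w hw => by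
            rw [card_incidenceFinset_eq_degree]; exact hdeg w hw)
      _ = d * d := by rw [Finset.sum_const, smul_eq_mul, hSd]
  -- edges inside the complement
  have h1 : (H.edgeFinset.filter P).card ≤ (Fintype.card V - d).choose 2 := by
    set A : Finset V := Sᶜ with hA
    have hAcard : A.card = Fintype.card V - d := by
      rw [hA, Finset.card_compl, hSd]
    -- the complete graph on A
    set K : SimpleGraph V :=
      { Adj := fun x y => x ≠ y ∧ x ∈ A ∧ y ∈ A
        symm := ⟨fun x y h => ⟨h.1.symm, h.2.2, h.2.1⟩⟩
        loopless := ⟨fun x h => h.1 rfl⟩ } with hK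
    letI : DecidableRel K.Adj := fun x y => by rw [hK]; exact instDecidableAnd
    have hsub : H.edgeFinset.filter P ⊆ K.edgeFinset := by
      intro e he
      rw [Finset.mem_filter] at he
      rw [mem_edgeFinset]
      induction e with
      | h x y =>
        have hadj : H.Adj x y := mem_edgeFinset.mp he.1
        have hxA : x ∈ A := by
          rw [hA, Finset.mem_compl]
          exact he.2 x (Sym2.mem_mk_left x y)
        have hyA : y ∈ A := by
          rw [hA, Finset.mem_compl]
          exact he.2 y (Sym2.mem_mk_right x y)
        exact ⟨hadj.ne, hxA, hyA⟩
    have hKdeg : ∀ x, K.degree x = if x ∈ A then A.card - 1 else 0 := by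
      intro x
      rw [← card_neighborFinset_eq_degree]
      split_ifs with hx
      · have : K.neighborFinset x = A.erase x := by
          ext y
          rw [mem_neighborFinset, Finset.mem_erase]
          constructor
          · rintro ⟨h1, _, h3⟩; exact ⟨h1.symm, h3⟩
          · rintro ⟨h1, h2⟩; exact ⟨h1.symm, hx, h2⟩
        rw [this, Finset.card_erase_of_mem hx]
      · have : K.neighborFinset x = ∅ := by
          ext y
          rw [mem_neighborFinset]
          simp only [Finset.notMem_empty, iff_false]
          rintro ⟨_, h2, _⟩; exact hx h2
        rw [this, Finset.card_empty]
    have hKcard : 2 * K.edgeFinset.card = A.card * (A.card - 1) := by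
      rw [← sum_degrees_eq_twice_card_edges]
      rw [Finset.sum_congr rfl (fun x _ => hKdeg x)]
      rw [Finset.sum_ite_mem, Finset.univ_inter, Finset.sum_const, smul_eq_mul]
    have hKle : K.edgeFinset.card = A.card.choose 2 := by
      have := two_mul_choose_two A.card
      omega
    calc (H.edgeFinset.filter P).card ≤ K.edgeFinset.card := Finset.card_le_card hsub
      _ = A.card.choose 2 := hKle
      _ = (Fintype.card V - d).choose 2 := by rw [hAcard]
  omega


end HamAux

open HamAux in
theorem kConnected_many_edges_hamiltonian {V : Type*} [Fintype V] [DecidableEq V]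
    (G : SimpleGraph V) [DecidableRel G.Adj] (k : ℕ) (n : ℕ) (hn : n = Fintype.card V)
    (hk : 1 ≤ k) (hG : KConnected G k) (hcard : 2 * (k ^ 2 + k) ≤ n)
    (hedges : (n - k).choose 2 + k ^ 2 < G.edgeFinset.card) :
    G.IsHamiltonian := by
  by_contra hnot
  have hk2 : 2 ≤ k ^ 2 + k := by nlinarith
  have hn4 : 4 ≤ Fintype.card V := by omega
  obtain ⟨H, hGH, hHnot, hmaxl⟩ := exists_maximal_nonham G hnot
  letI : DecidableRel H.Adj := Classical.decRel _
  -- a nonadjacent pair with maximal degree sum, ordered by degree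
  have hpair : ∃ u v : V, u ≠ v ∧ ¬H.Adj u v ∧ H.degree u ≤ H.degree v ∧
      ∀ x y : V, x ≠ y → ¬H.Adj x y → H.degree x + H.degree y ≤ H.degree u + H.degree v := by
    have hPP : ∃ pq : V × V, pq.1 ≠ pq.2 ∧ ¬H.Adj pq.1 pq.2 := by
      by_contra hall
      push_neg at hall
      apply hHnot
      have hHtop : H = ⊤ := by
        ext x y
        simp only [top_adj]
        exact ⟨fun h => h.ne, fun hxy => hall (x, y) hxy⟩
      rw [hHtop]
      exact top_isHamiltonian (by omega)
    obtain ⟨pq0, h0⟩ := hPP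
    set PP : Finset (V × V) := univ.filter (fun pq => pq.1 ≠ pq.2 ∧ ¬H.Adj pq.1 pq.2) with hPPdef
    have hmem0 : pq0 ∈ PP := by
      rw [hPPdef, Finset.mem_filter]
      exact ⟨Finset.mem_univ _, h0⟩
    have hnePP : PP.Nonempty := ⟨pq0, hmem0⟩
    obtain ⟨⟨a, b⟩, habm, hmax⟩ :=
      Finset.exists_max_image PP (fun pq => H.degree pq.1 + H.degree pq.2) hnePP
    simp only [hPPdef, Finset.mem_filter, Finset.mem_univ, true_and] at habm
    have hmax' : ∀ x y : V, x ≠ y → ¬H.Adj x y →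
        H.degree x + H.degree y ≤ H.degree a + H.degree b := by
      intro x y hxy hnadj
      apply hmax (x, y)
      rw [hPPdef, Finset.mem_filter]
      exact ⟨Finset.mem_univ _, hxy, hnadj⟩
    rcases le_total (H.degree a) (H.degree b) with h | h
    · exact ⟨a, b, habm.1, habm.2, h, hmax'⟩
    · refine ⟨b, a, habm.1.symm, fun h' => habm.2 h'.symm, h, fun x y hxy hnadj => ?_⟩
      have := hmax' x y hxy hnadj
      omega
  obtain ⟨u, v, huv_ne, huv_nadj, hdeg_le, hmaxdeg⟩ := hpair
  -- `H ⊔ edge u v` is hamiltonian by maximality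
  have hlt : H < H ⊔ edge u v := by
    refine lt_of_le_of_ne le_sup_left ?_
    intro heq
    have hadj : (H ⊔ edge u v).Adj u v := by
      rw [sup_adj, edge_adj]
      exact Or.inr ⟨Or.inl ⟨rfl, rfl⟩, huv_ne⟩
    rw [← heq] at hadj
    exact huv_nadj hadj
  obtain ⟨p, hp⟩ := exists_hamiltonian_path huv_ne huv_nadj (hmaxl _ hlt) (by omega) hHnot
  have hplen : p.length = Fintype.card V - 1 := hp.length_eq
  have hpinj := getVert_injOn p hp.isPath
  set I : Finset ℕ := (Finset.range p.length).filter (fun i => H.Adj u (p.getVert (i+1)))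
    with hIdef
  set S : Finset V := I.image (fun i => p.getVert i) with hSdef
  have hImem : ∀ i ∈ I, i < p.length ∧ H.Adj u (p.getVert (i+1)) := by
    intro i hi
    rw [hIdef, Finset.mem_filter, Finset.mem_range] at hi
    exact hi
  have hScard : S.card = I.card := by
    apply Finset.card_image_of_injOn
    intro i hi j hj hij
    exact hpinj i (hImem i hi).1.le j (hImem j hj).1.le hij
  have hIcard : I.card = H.degree u := by
    rw [← card_neighborFinset_eq_degree]
    apply Finset.card_bij (fun i _ => p.getVert (i+1))
    · intro i hi
      rw [mem_neighborFinset]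
      exact (hImem i hi).2
    · intro i hi j hj hij
      have := hpinj (i+1) (hImem i hi).1 (j+1) (hImem j hj).1 hij
      omega
    · intro y hy
      rw [mem_neighborFinset] at hy
      have hys : y ∈ p.support := hp.mem_support y
      obtain ⟨j, hjy, hjle⟩ := Walk.mem_support_iff_exists_getVert.mp hys
      have hj0 : j ≠ 0 := by
        intro h
        rw [h, p.getVert_zero] at hjy
        exact hy.ne hjy
      obtain ⟨i, rfl⟩ := Nat.exists_eq_succ_of_ne_zero hj0
      refine ⟨i, ?_, hjy⟩
      rw [hIdef, Finset.mem_filter, Finset.mem_range]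
      exact ⟨by omega, by rwa [hjy]⟩
  have hSd : ∀ w ∈ S, ¬H.Adj v w ∧ w ≠ v := by
    intro w hw
    rw [hSdef, Finset.mem_image] at hw
    obtain ⟨i, hiI, rfl⟩ := hw
    obtain ⟨hilt, hiadj⟩ := hImem i hiI
    constructor
    · intro hadj
      exact hHnot (rotation p hp huv_ne huv_nadj hilt hiadj hadj)
    · intro heqv
      have hvlen : p.getVert p.length = v := p.getVert_length
      have := hpinj i hilt.le p.length le_rfl (by rw [heqv, hvlen])
      omega
  have hdegS : ∀ w ∈ S, H.degree w ≤ H.degree u := by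
    intro w hw
    have h1 := hSd w hw
    have := hmaxdeg w v h1.2 (fun h => h1.1 h.symm)
    omega
  have hdisj1 : Disjoint S (H.neighborFinset v) := by
    rw [Finset.disjoint_left]
    intro w hwS hwN
    exact (hSd w hwS).1 ((mem_neighborFinset _ _ _).mp hwN)
  have hvS : v ∉ S := fun h => (hSd v h).2 rfl
  have hvN : v ∉ H.neighborFinset v := by simp
  have hcard_union : S.card + (H.neighborFinset v).card + 1 ≤ Fintype.card V := by
    have hle := Finset.card_le_univ (insert v (S ∪ H.neighborFinset v))
    rw [Finset.card_insert_of_notMem (by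
        rw [Finset.mem_union]; rintro (h | h); exacts [hvS h, hvN h]),
      Finset.card_union_of_disjoint hdisj1] at hle
    have : (univ : Finset V).card = Fintype.card V := Finset.card_univ
    omega
  have h2d : 2 * H.degree u + 1 ≤ Fintype.card V := by
    have h3 : (H.neighborFinset v).card = H.degree v := card_neighborFinset_eq_degree _ _
    omega
  have hkd : k ≤ H.degree u := le_trans (kconn_min_degree hG u) (degree_mono hGH u)
  have hcount := count_bound H S (H.degree u) (hScard.trans hIcard) hdegS
  have harith := arith hk hkd h2d (by omega : 2 * (k ^ 2 + k) ≤ Fintype.card V)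
  have hGH_edges : G.edgeFinset.card ≤ H.edgeFinset.card :=
    Finset.card_le_card (edgeFinset_mono hGH)
  rw [hn] at hedges
  omega
end

section
/- For 2 ≤ k ≤ n/2, the complete bipartite graph K_{k,n−k} is k-cyclable and has circumference exactly 2k; hence the bound c(G) ≥ 2k for k-cyclable graphs is best possible. -/
open SimpleGraph

namespace CBAux
open Sum
variable {α β : Type*}

def zag (a0 : α) : (l : List (α × β)) → (b : β) → (completeBipartiteGraph α β).Walk (inr b) (inl a0)
  | [], _ => Walk.cons (by simp) Walk.nil
  | (p :: r), b => Walk.cons (show (completeBipartiteGraph α β).Adj (inr b) (inl p.1) by simp)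
      (Walk.cons (show (completeBipartiteGraph α β).Adj (inl p.1) (inr p.2) by simp) (zag a0 r p.2))

lemma length_zag (a0 : α) : ∀ (l : List (α × β)) (b : β), (zag a0 l b).length = 2 * l.length + 1
  | [], _ => by simp [zag]
  | (p :: r), b => by simp [zag, length_zag a0 r p.2]; ring

lemma support_zag (a0 : α) : ∀ (l : List (α × β)) (b : β),
    (zag a0 l b).support = inr b :: ((l.flatMap fun p => [inl p.1, inr p.2]) ++ [inl a0])
  | [], _ => by simp [zag]
  | (p :: r), b => by simp [zag, support_zag a0 r p.2]

lemma flat_perm : ∀ (l : List (α × β)),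
    (l.flatMap fun p => [inl p.1, inr p.2] : List (α ⊕ β)).Perm
      (l.map (inl ∘ Prod.fst) ++ l.map (inr ∘ Prod.snd))
  | [] => by simp
  | (p :: r) => by
      simp only [List.flatMap_cons, List.map_cons]
      refine ((flat_perm r).cons _).cons _ |>.trans ?_
      exact (List.perm_middle.symm.cons _)

lemma nodup_support (a0 : α) (l : List (α × β)) (b : β)
    (h1 : (a0 :: l.map Prod.fst).Nodup) (h2 : (b :: l.map Prod.snd).Nodup) :
    (inr b :: ((l.flatMap fun p => [inl p.1, inr p.2]) ++ [inl a0]) : List (α ⊕ β)).Nodup := by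
  have hflat := flat_perm l
  have p1 : (inr b :: ((l.flatMap fun p => [inl p.1, inr p.2]) ++ [inl a0]) : List (α ⊕ β)).Perm
      (inr b :: inl a0 :: l.flatMap fun p => [inl p.1, inr p.2]) :=
    (List.perm_append_singleton _ _).cons _
  have p2 := p1.trans (List.Perm.swap _ _ _)
  have p3 := p2.trans ((hflat.cons (inr b : α ⊕ β)).cons (inl a0 : α ⊕ β))
  have p4 : (inl a0 :: inr b :: (l.map (inl ∘ Prod.fst) ++ l.map (inr ∘ Prod.snd)) : List (α ⊕ β)).Perm
      ((a0 :: l.map Prod.fst).map inl ++ (b :: l.map Prod.snd).map inr) := by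
    simpa using (List.perm_middle.symm.cons (inl a0 : α ⊕ β))
  rw [(p3.trans p4).nodup_iff]
  refine List.Nodup.append (h1.map inl_injective) (h2.map inr_injective) ?_
  intro x hx hy
  simp only [List.mem_map] at hx hy
  obtain ⟨a, -, rfl⟩ := hx
  obtain ⟨c, -, h⟩ := hy
  exact (inl_ne_inr h.symm).elim

lemma first_edge_not_mem (a0 : α) (c : β) :
    ∀ (l : List (α × β)) (b : β), a0 ∉ l.map Prod.fst → c ∉ l.map Prod.snd →
    (l = [] → c ≠ b) → s(inl a0, inr c) ∉ (zag a0 l b).edges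
  | [], b => by
      intro _ _ h3
      simp only [zag, Walk.edges_cons, Walk.edges_nil, List.mem_singleton]
      intro h
      rw [Sym2.eq_iff] at h
      rcases h with ⟨h, -⟩ | ⟨-, h'⟩
      · exact inl_ne_inr h
      · exact h3 rfl (inr_injective h')
  | (p :: r), b => by
      intro h1 h2 _
      simp only [List.map_cons, List.mem_cons, not_or] at h1 h2
      simp only [zag, Walk.edges_cons, List.mem_cons, not_or]
      refine ⟨?_, ?_, first_edge_not_mem a0 c r p.2 h1.2 h2.2 (fun _ hcb => h2.1 hcb)⟩
      · intro h
        rw [Sym2.eq_iff] at h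
        rcases h with ⟨h, -⟩ | ⟨h, -⟩
        · exact inl_ne_inr h
        · exact h1.1 (inl_injective h)
      · intro h
        rw [Sym2.eq_iff] at h
        rcases h with ⟨h, -⟩ | ⟨h, -⟩
        · exact h1.1 (inl_injective h)
        · exact inl_ne_inr h

/-- The closed walk starting at `inl a0`, going to `inr b`, then zig-zagging along `l`. -/
def mkCycle (a0 : α) (b : β) (l : List (α × β)) :
    (completeBipartiteGraph α β).Walk (inl a0) (inl a0) :=
  Walk.cons (show (completeBipartiteGraph α β).Adj (inl a0) (inr b) by simp) (zag a0 l b)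

lemma isCycle_mkCycle (a0 : α) (b : β) (l : List (α × β)) (hne : l ≠ [])
    (h1 : (a0 :: l.map Prod.fst).Nodup) (h2 : (b :: l.map Prod.snd).Nodup) :
    (mkCycle a0 b l).IsCycle := by
  rw [mkCycle, Walk.cons_isCycle_iff]
  constructor
  · rw [Walk.isPath_def, support_zag]
    exact nodup_support a0 l b h1 h2
  · exact first_edge_not_mem a0 b l b (by simpa using (List.nodup_cons.mp h1).1)
      (by simpa using (List.nodup_cons.mp h2).1) (fun hl => absurd hl hne)

lemma length_mkCycle (a0 : α) (b : β) (l : List (α × β)) :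
    (mkCycle a0 b l).length = 2 * l.length + 2 := by
  simp [mkCycle, length_zag]

lemma mem_support_mkCycle_inl {a0 a : α} (b : β) (l : List (α × β))
    (ha : a = a0 ∨ a ∈ l.map Prod.fst) : inl a ∈ (mkCycle a0 b l).support := by
  simp only [mkCycle, Walk.support_cons, support_zag, List.mem_cons, List.mem_append,
    List.mem_flatMap, List.mem_singleton]
  rcases ha with rfl | ha
  · left; rfl
  · obtain ⟨p, hp, rfl⟩ := List.mem_map.mp ha
    exact Or.inr (Or.inr (Or.inl ⟨p, hp, by simp⟩))

lemma mem_support_mkCycle_inr (a0 : α) {b c : β} (l : List (α × β))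
    (hc : c = b ∨ c ∈ l.map Prod.snd) : inr c ∈ (mkCycle a0 b l).support := by
  simp only [mkCycle, Walk.support_cons, support_zag, List.mem_cons, List.mem_append,
    List.mem_flatMap, List.mem_singleton]
  rcases hc with rfl | hc
  · right; left; rfl
  · obtain ⟨p, hp, rfl⟩ := List.mem_map.mp hc
    exact Or.inr (Or.inr (Or.inl ⟨p, hp, by simp⟩))

lemma parity {u v : α ⊕ β} (w : (completeBipartiteGraph α β).Walk u v) :
    2 * (w.support.countP (·.isLeft)) =
      w.length + (if u.isLeft then 1 else 0) + (if v.isLeft then 1 else 0) := by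
  induction w with
  | nil => simp only [Walk.support_nil, List.countP_cons, List.countP_nil, Walk.length_nil]
           split <;> omega
  | @cons u x v h p ih =>
    simp only [Walk.support_cons, List.countP_cons, Walk.length_cons]
    rcases h with ⟨h1, h2⟩ | ⟨h1, h2⟩ <;> cases u <;> cases x <;> simp_all <;> omega

lemma cycle_le {k : ℕ} [Fintype α] (hcard : Fintype.card α = k)
    {v : α ⊕ β} (w : (completeBipartiteGraph α β).Walk v v) (hw : w.IsCycle) :
    w.length ≤ 2 * k := by
  classical
  have hnd : w.support.tail.Nodup := ((Walk.isCycle_def w).mp hw).2.2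
  have hpar := parity w
  have hsup := w.support_eq_cons
  rw [hsup, List.countP_cons] at hpar
  have hlen : 2 * (w.support.tail.countP (·.isLeft)) = w.length := by
    split at hpar <;> omega
  rw [← hlen]
  have : w.support.tail.countP (·.isLeft) ≤ k := by
    rw [List.countP_eq_length_filter]
    have hnd2 : (w.support.tail.filter (·.isLeft)).Nodup := hnd.filter _
    rw [← List.toFinset_card_of_nodup hnd2]
    have hsub : (w.support.tail.filter (·.isLeft)).toFinset ⊆ Finset.univ.image inl := by
      intro x hx
      simp only [List.mem_toFinset, List.mem_filter] at hx
      cases x with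
      | inl a => simp
      | inr c => simp at hx
    calc (w.support.tail.filter (·.isLeft)).toFinset.card
        ≤ (Finset.univ.image (inl : α → α ⊕ β)).card := Finset.card_le_card hsub
      _ = k := by rw [Finset.card_image_of_injective _ inl_injective, Finset.card_univ, hcard]
  omega

end CBAux

theorem completeBipartite_kCyclable_circumference (n k : ℕ) (hk : 2 ≤ k) (hkn : 2 * k ≤ n) :
    KCyclable (completeBipartiteGraph (Fin k) (Fin (n - k))) k ∧
    (∀ (v : Fin k ⊕ Fin (n - k)) (w : (completeBipartiteGraph (Fin k) (Fin (n - k))).Walk v v),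
      w.IsCycle → w.length ≤ 2 * k) ∧
    (∃ (v : Fin k ⊕ Fin (n - k)) (w : (completeBipartiteGraph (Fin k) (Fin (n - k))).Walk v v),
      w.IsCycle ∧ w.length = 2 * k) := by
  classical
  have key : ∀ U : Finset (Fin (n - k)), U.card = k →
      ∃ (v : Fin k ⊕ Fin (n - k))
        (w : (completeBipartiteGraph (Fin k) (Fin (n - k))).Walk v v),
        w.IsCycle ∧ w.length = 2 * k ∧
        (∀ a : Fin k, Sum.inl a ∈ w.support) ∧ (∀ c ∈ U, Sum.inr c ∈ w.support) := by
    intro U hU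
    set fsts := (Finset.univ : Finset (Fin k)).toList with hfsts
    have hfl : fsts.length = k := by simp [hfsts]
    have hfnd : fsts.Nodup := Finset.nodup_toList _
    obtain ⟨a0, ftail, hf⟩ := List.exists_cons_of_ne_nil
      (show fsts ≠ [] by intro h; rw [h] at hfl; simp at hfl; omega)
    set snds := U.toList with hsnds
    have hsl : snds.length = k := by simp [hsnds, hU]
    have hsnd : snds.Nodup := Finset.nodup_toList _
    obtain ⟨b0, rtail, hs⟩ := List.exists_cons_of_ne_nil
      (show snds ≠ [] by intro h; rw [h] at hsl; simp at hsl; omega)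
    have hftl : ftail.length = k - 1 := by rw [hf] at hfl; simp at hfl; omega
    have hrtl : rtail.length = k - 1 := by rw [hs] at hsl; simp at hsl; omega
    set l := ftail.zip rtail with hl
    have hlfst : l.map Prod.fst = ftail := List.map_fst_zip (by omega)
    have hlsnd : l.map Prod.snd = rtail := List.map_snd_zip (by omega)
    have hllen : l.length = k - 1 := by rw [hl, List.length_zip]; omega
    have hne : l ≠ [] := by
      intro h; rw [h] at hllen; simp at hllen; omega
    refine ⟨Sum.inl a0, CBAux.mkCycle a0 b0 l, ?_, ?_, ?_, ?_⟩
    · refine CBAux.isCycle_mkCycle a0 b0 l hne ?_ ?_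
      · rw [hlfst, ← hf]; exact hfnd
      · rw [hlsnd, ← hs]; exact hsnd
    · rw [CBAux.length_mkCycle, hllen]; omega
    · intro a
      refine CBAux.mem_support_mkCycle_inl b0 l ?_
      have : a ∈ fsts := by simp [hfsts]
      rw [hf] at this
      rcases List.mem_cons.mp this with h | h
      · exact Or.inl h
      · exact Or.inr (hlfst ▸ h)
    · intro c hc
      refine CBAux.mem_support_mkCycle_inr a0 l ?_
      have : c ∈ snds := by simp [hsnds, hc]
      rw [hs] at this
      rcases List.mem_cons.mp this with h | h
      · exact Or.inl h
      · exact Or.inr (hlsnd ▸ h)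
  have hcFinK : Fintype.card (Fin k) = k := Fintype.card_fin k
  have hcard2 : k ≤ Fintype.card (Fin (n - k)) := by rw [Fintype.card_fin]; omega
  refine ⟨?_, ?_, ?_⟩
  · intro S hS
    obtain ⟨U, hsub, hUcard⟩ := Finset.exists_superset_card_eq
      (s := S.toRight) (n := k) (le_trans Finset.card_toRight_le hS.le) hcard2
    obtain ⟨v, w, hcyc, -, hinl, hinr⟩ := key U hUcard
    refine ⟨v, w, hcyc, ?_⟩
    intro x hx
    cases x with
    | inl a => exact hinl a
    | inr c => exact hinr c (hsub (by simpa using hx))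
  · intro v w hw
    exact CBAux.cycle_le hcFinK w hw
  · obtain ⟨U, -, hUcard⟩ := Finset.exists_superset_card_eq
      (s := (∅ : Finset (Fin (n - k)))) (n := k) (by simp) hcard2
    obtain ⟨v, w, hcyc, hlen, -, -⟩ := key U hUcard
    exact ⟨v, w, hcyc, hlen⟩
end

section
/- Suppose G equals its Bondy–Chvátal closure, G is nonhamiltonian of order n, and m ≤ α(G). Then the complement of G has at least (m/2)(n−m) edges if n is odd, and at least (m/2)(n−m) + m/2 − 1 edges if n is even. -/
/-- `S` is an independent set: its vertices are pairwise nonadjacent. -/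
def IsIndepSet {V : Type*} (G : SimpleGraph V) (S : Finset V) : Prop :=
  ∀ x ∈ S, ∀ y ∈ S, x ≠ y → ¬ G.Adj x y
open SimpleGraph
section Aux
open Finset

namespace ClosureAux

def tWalk {V : Type*} [DecidableEq V] :
    (b a : V) → (l : List V) → ((b :: (l ++ [a])).Nodup) → (⊤ : SimpleGraph V).Walk b a
  | b, a, [], h => Walk.cons (by simpa using (List.nodup_cons.1 h).1) Walk.nil
  | b, a, c :: l, h =>
      Walk.cons (by simp only [top_adj]; rintro rfl; exact (List.nodup_cons.1 h).1 (by simp))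
        (tWalk c a l (List.nodup_cons.1 h).2)

lemma tWalk_support {V : Type*} [DecidableEq V] :
    ∀ (b a : V) (l : List V) (h), (tWalk b a l h).support = b :: (l ++ [a])
  | b, a, [], h => rfl
  | b, a, c :: l, h => by
      simp [tWalk, tWalk_support c a l _]

lemma tWalk_edge_end {V : Type*} [DecidableEq V] :
    ∀ (b a : V) (l : List V) (h) (x : V), s(x, a) ∈ (tWalk b a l h).edges → x ∈ l ∨ l = []
  | b, a, [], h, x, hx => Or.inr rfl
  | b, a, c :: l, h, x, hx => by
      simp only [tWalk, Walk.edges_cons, List.mem_cons] at hx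
      have ha : a ∉ b :: c :: l := by
        intro hmem
        simp only [List.cons_append, List.nodup_cons, List.mem_append, List.mem_cons,
          List.mem_singleton, List.nodup_append, List.nodup_singleton, List.disjoint_singleton] at h hmem
        rcases hmem with rfl | rfl | hmem
        · simp_all
        · simp_all
        · have := h.2.2.2.2 a hmem
          simp_all
      rcases hx with hx | hx
      · exfalso
        rw [Sym2.eq_iff] at hx
        rcases hx with ⟨-, rfl⟩ | ⟨-, rfl⟩
        · exact ha (by simp)
        · exact ha (by simp)
      · rcases tWalk_edge_end c a l _ x hx with h1 | h1
        · exact Or.inl (List.mem_cons_of_mem _ h1)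
        · subst h1
          simp only [tWalk, Walk.edges_cons, Walk.edges_nil, List.mem_singleton] at hx
          rw [Sym2.eq_iff] at hx
          rcases hx with ⟨rfl, -⟩ | ⟨-, rfl⟩
          · exact Or.inl (by simp)
          · exact absurd (by simp) ha

end ClosureAux

namespace ClosureAux

lemma top_isHamiltonian {V : Type*} [Fintype V] [DecidableEq V]
    (h3 : 3 ≤ Fintype.card V) : (⊤ : SimpleGraph V).IsHamiltonian := by
  intro _
  have hnd : (univ : Finset V).toList.Nodup := Finset.nodup_toList _
  have hlen : (univ : Finset V).toList.length = Fintype.card V := Finset.length_toList _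
  have hmem : ∀ v : V, v ∈ (univ : Finset V).toList := fun v => Finset.mem_toList.2 (mem_univ v)
  obtain ⟨a, b, c, rest, hl⟩ : ∃ a b c rest, (univ : Finset V).toList = a :: b :: c :: rest := by
    rcases hu : (univ : Finset V).toList with _ | ⟨a, _ | ⟨b, _ | ⟨c, r⟩⟩⟩ <;>
      rw [hu] at hlen <;> first
        | (exact ⟨_, _, _, _, rfl⟩)
        | (exfalso; simp at hlen; omega)
  rw [hl] at hnd hmem
  have hperm : (b :: ((c :: rest) ++ [a])).Perm (a :: b :: c :: rest) :=
    ((List.perm_append_singleton _ _).cons b).trans (List.Perm.swap a b _)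
  have hnd2 : (b :: ((c :: rest) ++ [a])).Nodup := hperm.nodup_iff.2 hnd
  have hab : a ≠ b := by
    have := hnd
    simp only [List.nodup_cons, List.mem_cons] at this
    exact fun h => this.1 (Or.inl h)
  have hadj : (⊤ : SimpleGraph V).Adj a b := by simpa using hab
  set P := tWalk b a (c :: rest) hnd2 with hPdef
  have hPs : P.support = b :: ((c :: rest) ++ [a]) := tWalk_support b a (c :: rest) hnd2
  have hP : P.IsPath := Walk.IsPath.mk' (by rw [hPs]; exact hnd2)
  have he : s(a, b) ∉ P.edges := by
    intro hmem'
    rw [Sym2.eq_swap] at hmem'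
    rcases tWalk_edge_end b a (c :: rest) hnd2 b hmem' with h1 | h1
    · have := hnd
      simp only [List.nodup_cons] at this
      exact this.2.1 h1
    · simp at h1
  refine ⟨a, Walk.cons hadj P, ?_⟩
  rw [Walk.isHamiltonianCycle_iff_isCycle_and_support_count_tail_eq_one]
  refine ⟨Path.cons_isCycle ⟨P, hP⟩ hadj he, fun v => ?_⟩
  rw [Walk.support_cons, List.tail_cons, hPs]
  exact List.count_eq_one_of_mem hnd2 (hperm.mem_iff.2 (hmem v))


end ClosureAux

namespace ClosureAux

lemma sum_degree_le {V : Type*} [Fintype V] [DecidableEq V]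
    (H : SimpleGraph V) [DecidableRel H.Adj] (S : Finset V) :
    (∑ x ∈ S, H.degree x) ≤ H.edgeFinset.card + Nat.choose S.card 2 := by
  classical
  have hdeg : ∀ x : V, H.degree x = (H.edgeFinset.filter (fun e => x ∈ e)).card := by
    intro x
    rw [← card_incidenceFinset_eq_degree]
    congr 1
    ext e
    simp only [mem_incidenceFinset, mem_filter, mem_edgeFinset]
    exact Iff.rfl
  set D := S.sym2.filter (fun e => ¬ e.IsDiag) with hD
  have hstep : ∀ e ∈ H.edgeFinset, (S.filter (fun x => x ∈ e)).card ≤ 1 + (if e ∈ D then 1 else 0) := by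
    intro e he
    induction e with | _ u v =>
    have huv : u ≠ v := by
      have := H.not_isDiag_of_mem_edgeSet (mem_edgeFinset.1 he)
      simpa using this
    by_cases hu : u ∈ S <;> by_cases hv : v ∈ S
    · have hDm : s(u, v) ∈ D := by
        simp [hD, Finset.mk_mem_sym2_iff, hu, hv, huv]
      rw [if_pos hDm]
      have hsub : S.filter (fun x => x ∈ s(u, v)) ⊆ {u, v} := by
        intro x hx
        simp only [mem_filter, Sym2.mem_iff] at hx
        simp [hx.2]
      calc (S.filter (fun x => x ∈ s(u, v))).card ≤ ({u, v} : Finset V).card :=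
            card_le_card hsub
        _ ≤ 2 := card_insert_le _ _ |>.trans (by simp)
    · have hsub : S.filter (fun x => x ∈ s(u, v)) ⊆ {u} := by
        intro x hx
        simp only [mem_filter, Sym2.mem_iff] at hx
        rcases hx.2 with rfl | rfl
        · simp
        · exact absurd hx.1 hv
      calc _ ≤ ({u} : Finset V).card := card_le_card hsub
        _ ≤ _ := by simp
    · have hsub : S.filter (fun x => x ∈ s(u, v)) ⊆ {v} := by
        intro x hx
        simp only [mem_filter, Sym2.mem_iff] at hx
        rcases hx.2 with rfl | rfl
        · exact absurd hx.1 hu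
        · simp
      calc _ ≤ ({v} : Finset V).card := card_le_card hsub
        _ ≤ _ := by simp
    · have hsub : S.filter (fun x => x ∈ s(u, v)) ⊆ ∅ := by
        intro x hx
        simp only [mem_filter, Sym2.mem_iff] at hx
        rcases hx.2 with rfl | rfl
        · exact absurd hx.1 hu
        · exact absurd hx.1 hv
      calc _ ≤ (∅ : Finset V).card := card_le_card hsub
        _ ≤ _ := by simp
  have hDcard : D.card = Nat.choose S.card 2 := by
    have h2 : (S.sym2.filter (fun e => e.IsDiag)) = S.image Sym2.diag := by
      ext e
      induction e with | _ u v =>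
      simp only [mem_filter, Finset.mk_mem_sym2_iff, Sym2.mk_isDiag_iff, mem_image]
      constructor
      · rintro ⟨⟨hu, -⟩, rfl⟩
        exact ⟨u, hu, rfl⟩
      · rintro ⟨w, hw, hwe⟩
        have : u = w ∧ v = w := by
          rw [Sym2.diag] at hwe
          rw [Sym2.eq_iff] at hwe
          tauto
        rcases this with ⟨rfl, rfl⟩
        exact ⟨⟨hw, hw⟩, rfl⟩
    have h3 := Finset.card_filter_add_card_filter_not
      (s := S.sym2) (p := fun e => e.IsDiag)
    have h4 : (S.sym2.filter (fun e => e.IsDiag)).card = S.card := by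
      rw [h2, Finset.card_image_of_injective _ Sym2.diag_injective]
    have h5 : S.sym2.card = S.card + Nat.choose S.card 2 := by
      rw [Finset.card_sym2, Nat.choose_succ_succ, Nat.choose_one_right]
    rw [hD]
    omega
  calc ∑ x ∈ S, H.degree x
      = ∑ x ∈ S, ∑ e ∈ H.edgeFinset, (if x ∈ e then 1 else 0) := by
        refine Finset.sum_congr rfl fun x _ => ?_
        rw [hdeg x, card_filter]
    _ = ∑ e ∈ H.edgeFinset, ∑ x ∈ S, (if x ∈ e then 1 else 0) := Finset.sum_comm
    _ = ∑ e ∈ H.edgeFinset, (S.filter (fun x => x ∈ e)).card := by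
        refine Finset.sum_congr rfl fun e _ => ?_
        rw [card_filter]
    _ ≤ ∑ e ∈ H.edgeFinset, (1 + if e ∈ D then 1 else 0) := Finset.sum_le_sum hstep
    _ = H.edgeFinset.card + ∑ e ∈ H.edgeFinset, (if e ∈ D then 1 else 0) := by
        rw [Finset.sum_add_distrib, Finset.sum_const, smul_eq_mul, mul_one]
    _ = H.edgeFinset.card + (H.edgeFinset.filter (fun e => e ∈ D)).card := by
        rw [card_filter]
    _ ≤ H.edgeFinset.card + D.card := by
        gcongr
        exact fun e he => (mem_filter.1 he).2
    _ = H.edgeFinset.card + Nat.choose S.card 2 := by rw [hDcard]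

end ClosureAux

end Aux

theorem closure_closed_complement_edges {V : Type*} [Fintype V] [DecidableEq V]
    (G : SimpleGraph V) [DecidableRel G.Adj] (n m : ℕ) (hn : n = Fintype.card V)
    (hcl : ∀ x y : V, x ≠ y → ¬ G.Adj x y → G.degree x + G.degree y ≤ n - 1)
    (hham : ¬ G.IsHamiltonian)
    (hm : ∃ S : Finset V, S.card = m ∧ _root_.IsIndepSet G S) :
    (Odd n → (m : ℚ) / 2 * ((n : ℚ) - m) ≤ (Gᶜ.edgeFinset.card : ℚ)) ∧
    (Even n → (m : ℚ) / 2 * ((n : ℚ) - m) + (m : ℚ) / 2 - 1 ≤ (Gᶜ.edgeFinset.card : ℚ)) := by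
  obtain ⟨S, hScard, hSind⟩ := hm
  have hmn : m ≤ n := by
    rw [hn, ← hScard, ← Finset.card_univ]
    exact Finset.card_le_univ S
  have hE0 : (0:ℚ) ≤ (Gᶜ.edgeFinset.card : ℚ) := Nat.cast_nonneg _
  by_cases hm0 : m = 0
  · subst hm0
    constructor <;> intro _ <;> push_cast <;> nlinarith [hE0]
  have hm1 : 1 ≤ m := Nat.one_le_iff_ne_zero.2 hm0
  have hn1 : 1 ≤ n := le_trans hm1 hmn
  have hdc : ∀ x : V, Gᶜ.degree x + G.degree x = n - 1 := by
    intro x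
    rw [degree_compl, hn]
    have := G.degree_lt_card_verts x
    omega
  have master : ∀ T : Finset V,
      T.card * (n - 1) ≤ Gᶜ.edgeFinset.card + Nat.choose T.card 2 + ∑ x ∈ T, G.degree x := by
    intro T
    have key := ClosureAux.sum_degree_le Gᶜ T
    have hsum : (∑ x ∈ T, Gᶜ.degree x) + ∑ x ∈ T, G.degree x = T.card * (n - 1) := by
      rw [← Finset.sum_add_distrib, Finset.sum_congr rfl (fun x _ => hdc x),
        Finset.sum_const, smul_eq_mul]
    omega
  by_cases hm2 : 2 ≤ m
  · -- main case
    have hSne : S.Nonempty := Finset.card_pos.1 (by omega)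
    obtain ⟨x₀, hx₀S, hx₀⟩ := Finset.exists_max_image S (fun x => G.degree x) hSne
    have hSe : (S.erase x₀).Nonempty := by
      rw [← Finset.card_pos, Finset.card_erase_of_mem hx₀S]
      omega
    obtain ⟨x₁, hx₁e, hx₁⟩ := Finset.exists_max_image (S.erase x₀) (fun x => G.degree x) hSe
    have hx₁S : x₁ ∈ S := Finset.mem_of_mem_erase hx₁e
    have hx₁0 : x₁ ≠ x₀ := Finset.ne_of_mem_erase hx₁e
    have h01 : G.degree x₀ + G.degree x₁ ≤ n - 1 :=
      hcl x₀ x₁ hx₁0.symm (hSind x₀ hx₀S x₁ hx₁S hx₁0.symm)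
    set S' := (S.erase x₀).erase x₁ with hS'
    have hS'card : S'.card = m - 2 := by
      rw [hS', Finset.card_erase_of_mem hx₁e, Finset.card_erase_of_mem hx₀S, hScard]
      omega
    have hy2 : ∀ y ∈ S', 2 * G.degree y ≤ n - 1 := by
      intro y hy
      have hyS : y ∈ S := Finset.mem_of_mem_erase (Finset.mem_of_mem_erase hy)
      have hy1 : y ≠ x₁ := Finset.ne_of_mem_erase hy
      have hle : G.degree y ≤ G.degree x₁ := hx₁ y (Finset.mem_of_mem_erase hy)
      have := hcl y x₁ hy1 (hSind y hyS x₁ hx₁S hy1)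
      omega
    set dsum := ∑ x ∈ S, G.degree x with hdsum
    have hsplit : dsum = G.degree x₀ + (G.degree x₁ + ∑ x ∈ S', G.degree x) := by
      rw [hdsum, ← Finset.add_sum_erase S _ hx₀S, ← Finset.add_sum_erase _ _ hx₁e]
    have hmaster := master S
    rw [hScard, ← hdsum] at hmaster
    have hmq : ((m:ℚ)) * ((n:ℚ) - 1) ≤ (Gᶜ.edgeFinset.card : ℚ) + (m:ℚ) * ((m:ℚ) - 1) / 2 + (dsum : ℚ) := by
      have := (Nat.cast_le (α := ℚ)).2 hmaster
      push_cast [Nat.cast_sub hn1, Nat.cast_choose_two] at this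
      linarith
    have hn2 : 2 ≤ n := le_trans hm2 hmn
    constructor <;> intro hpar
    · -- odd case
      have hbound : 2 * dsum ≤ 2 * (n - 1) + (m - 2) * (n - 1) := by
        have hb : ∑ x ∈ S', 2 * G.degree x ≤ S'.card * (n - 1) := by
          have := Finset.sum_le_card_nsmul S' (fun x => 2 * G.degree x) (n - 1) hy2
          simpa using this
        rw [hS'card] at hb
        rw [hsplit]
        have : ∑ x ∈ S', 2 * G.degree x = 2 * ∑ x ∈ S', G.degree x := by
          rw [Finset.mul_sum]
        omega
      have hbq : 2 * (dsum : ℚ) ≤ 2 * ((n:ℚ) - 1) + ((m:ℚ) - 2) * ((n:ℚ) - 1) := by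
        have := (Nat.cast_le (α := ℚ)).2 hbound
        push_cast [Nat.cast_sub hn1, Nat.cast_sub hm2] at this
        linarith
      nlinarith [hbq, hmq]
    · -- even case
      obtain ⟨k, hk⟩ := hpar
      have hbound : 2 * dsum ≤ 2 * (n - 1) + (m - 2) * (n - 2) := by
        have hy2' : ∀ y ∈ S', 2 * G.degree y ≤ n - 2 := by
          intro y hy
          have := hy2 y hy
          omega
        have hb : ∑ x ∈ S', 2 * G.degree x ≤ S'.card * (n - 2) := by
          have := Finset.sum_le_card_nsmul S' (fun x => 2 * G.degree x) (n - 2) hy2'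
          simpa using this
        rw [hS'card] at hb
        rw [hsplit]
        have : ∑ x ∈ S', 2 * G.degree x = 2 * ∑ x ∈ S', G.degree x := by
          rw [Finset.mul_sum]
        omega
      have hbq : 2 * (dsum : ℚ) ≤ 2 * ((n:ℚ) - 1) + ((m:ℚ) - 2) * ((n:ℚ) - 2) := by
        have := (Nat.cast_le (α := ℚ)).2 hbound
        push_cast [Nat.cast_sub hn1, Nat.cast_sub hm2, Nat.cast_sub hn2] at this
        linarith
      nlinarith [hbq, hmq]
  · -- m = 1
    have hm1' : m = 1 := by omega
    subst hm1'
    by_cases hn3 : 3 ≤ n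
    · have hcomp : ¬ ∀ x y : V, x ≠ y → G.Adj x y := by
        intro hc
        refine hham (SimpleGraph.IsHamiltonian.mono ?_ (ClosureAux.top_isHamiltonian (hn ▸ hn3)))
        intro x y hxy
        exact hc x y (by simpa using hxy)
      push_neg at hcomp
      obtain ⟨x, y, hxy, hnadj⟩ := hcomp
      have hsumxy := hcl x y hxy hnadj
      have hz : ∃ z : V, 2 * G.degree z ≤ n - 1 := by
        rcases le_total (G.degree x) (G.degree y) with h | h
        · exact ⟨x, by omega⟩
        · exact ⟨y, by omega⟩
      obtain ⟨z, hz⟩ := hz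
      have hEz : Gᶜ.degree z ≤ Gᶜ.edgeFinset.card := by
        have := ClosureAux.sum_degree_le Gᶜ ({z} : Finset V)
        simpa using this
      have h2E : n - 1 ≤ 2 * Gᶜ.edgeFinset.card := by
        have := hdc z
        omega
      have h2EQ : (n:ℚ) - 1 ≤ 2 * (Gᶜ.edgeFinset.card : ℚ) := by
        have := (Nat.cast_le (α := ℚ)).2 h2E
        push_cast [Nat.cast_sub hn1] at this
        linarith
      constructor <;> intro _ <;> push_cast <;> linarith
    · constructor <;> intro hpar
      · have : n = 1 := by
          obtain ⟨k, hk⟩ := hpar; omega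
        rw [this]; push_cast; linarith
      · have : n = 2 := by
          obtain ⟨k, hk⟩ := hpar; omega
        rw [this]; push_cast; linarith
end

section
/- If G is a k-cyclable graph on n vertices with n ≥ 2k² (k ≥ 2), then G has more than (1/2)(2k−1)(n−1) edges or a cycle of length at least 2k; consequently c(G) ≥ 2k whenever k ≤ √(n/2). -/
open SimpleGraph

section Aux

variable {V : Type*} {G : SimpleGraph V}

private lemma sum_countP_le [DecidableEq V] (S : Finset V) (l : List (Sym2 V))
    (h : ∀ e ∈ l, (S.filter (fun x => x ∈ e)).card ≤ 1) :
    (∑ x ∈ S, l.countP (fun e => x ∈ e)) ≤ l.length := by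
  induction l with
  | nil => simp
  | cons e t ih =>
    simp only [List.countP_cons, List.length_cons, decide_eq_true_eq]
    rw [Finset.sum_add_distrib]
    have h1 : (∑ x ∈ S, if x ∈ e then 1 else 0)
        = (S.filter (fun x => x ∈ e)).card := by
      simp [Finset.sum_boole]
    rw [h1]
    have h2 := ih (fun e' he' => h e' (List.mem_cons_of_mem _ he'))
    have h3 := h e List.mem_cons_self
    omega

/-- An independent set lying on a cycle forces the cycle to have length at least
twice the size of the set. -/
private lemma indep_on_cycle_length [DecidableEq V] {v : V} {w : G.Walk v v}
    (hw : w.IsCycle) (S : Finset V) (hind : ∀ a ∈ S, ∀ b ∈ S, ¬ G.Adj a b)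
    (hsub : ∀ x ∈ S, x ∈ w.support) : 2 * S.card ≤ w.length := by
  have key : ∀ x ∈ S, 2 ≤ w.edges.countP (fun e => x ∈ e) := by
    intro x hx
    have hxs := hsub x hx
    have heven : Even (w.edges.countP (fun e => x ∈ e)) := by
      have := hw.isTrail.even_countP_edges_iff x
      simp at this
      exact this
    have hpos : 1 ≤ w.edges.countP (fun e => x ∈ e) := by
      have hrot := (w.rotate_edges x hxs).perm
      rw [← hrot.countP_eq]
      have hnn : ¬ (w.rotate x hxs).Nil := (hw.rotate hxs).not_nil
      obtain ⟨u, ha, q, hq⟩ := Walk.not_nil_iff.mp hnn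
      rw [hq]
      simp [List.countP_cons]
    obtain ⟨m, hm⟩ := heven
    omega
  have hle : ∀ e ∈ w.edges, (S.filter (fun x => x ∈ e)).card ≤ 1 := by
    intro e he
    have heG : e ∈ G.edgeSet := w.edges_subset_edgeSet he
    induction e with
    | h a b =>
      by_contra hcon
      push_neg at hcon
      obtain ⟨p, hp, q, hq, hpq⟩ := Finset.one_lt_card.mp hcon
      obtain ⟨hpS, hpe⟩ := Finset.mem_filter.mp hp
      obtain ⟨hqS, hqe⟩ := Finset.mem_filter.mp hq
      rw [Sym2.mem_iff] at hpe hqe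
      have hadj : G.Adj a b := heG
      rcases hpe with rfl | rfl <;> rcases hqe with rfl | rfl
      · exact hpq rfl
      · exact hind p hpS q hqS hadj
      · exact hind p hpS q hqS hadj.symm
      · exact hpq rfl
  calc 2 * S.card = ∑ _x ∈ S, 2 := by rw [Finset.sum_const, smul_eq_mul, mul_comm]
    _ ≤ ∑ x ∈ S, w.edges.countP (fun e => x ∈ e) := Finset.sum_le_sum key
    _ ≤ w.edges.length := sum_countP_le S w.edges hle
    _ = w.length := w.length_edges

/-- In a path there is a "last" element of a given nonempty set `N` of support
vertices: the prefix up to it contains all of `N`. -/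
private lemma exists_last_prefix [DecidableEq V] {x y : V} (p : G.Walk x y) :
    p.IsPath →
    ∀ N : Finset V, N.Nonempty → (∀ a ∈ N, a ∈ p.support) →
      ∃ (z : V) (hz : z ∈ p.support), z ∈ N ∧
        ∀ a ∈ N, a ∈ (p.takeUntil z hz).support := by
  induction p with
  | @nil x' =>
    intro _hp N hNne hNs
    have hall : ∀ a ∈ N, a = x' := by
      intro a ha
      have := hNs a ha
      simpa using this
    obtain ⟨a, ha⟩ := hNne
    have hxN : x' ∈ N := by rw [← hall a ha]; exact ha
    refine ⟨x', Walk.start_mem_support _, hxN, ?_⟩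
    intro b hb
    have hb' : b = x' := hall b hb
    subst hb'
    exact Walk.start_mem_support _
  | @cons x' w' y' hr q ih =>
    intro hp N hNne hNs
    rw [Walk.cons_isPath_iff] at hp
    obtain ⟨hq, hxq⟩ := hp
    by_cases hN' : (N.filter (fun a => a ∈ q.support)).Nonempty
    · obtain ⟨z, hz, hzN', hall⟩ := ih hq _ hN'
        (fun a ha => (Finset.mem_filter.mp ha).2)
      have hzx : ¬ x' = z := fun h' => hxq (h' ▸ hz)
      have hzs : z ∈ (Walk.cons hr q).support := by simp [hz]
      have hta : (Walk.cons hr q).takeUntil z hzs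
          = Walk.cons hr (q.takeUntil z hz) := by
        simp only [Walk.takeUntil]
        rw [dif_neg hzx]
      refine ⟨z, hzs, (Finset.mem_filter.mp hzN').1, ?_⟩
      intro a ha
      rw [hta, Walk.support_cons]
      have := hNs a ha
      rw [Walk.support_cons, List.mem_cons] at this
      rcases this with rfl | hmem
      · exact List.mem_cons_self
      · exact List.mem_cons_of_mem _
          (hall a (Finset.mem_filter.mpr ⟨ha, hmem⟩))
    · have hall : ∀ a ∈ N, a = x' := by
        intro a ha
        have := hNs a ha
        rw [Walk.support_cons, List.mem_cons] at this
        rcases this with rfl | hmem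
        · rfl
        · exact absurd ⟨a, Finset.mem_filter.mpr ⟨ha, hmem⟩⟩ hN'
      obtain ⟨a, ha⟩ := hNne
      have hxN : x' ∈ N := by rw [← hall a ha]; exact ha
      refine ⟨x', Walk.start_mem_support _, hxN, ?_⟩
      intro b hb
      have hb' : b = x' := hall b hb
      subst hb'
      exact Walk.start_mem_support _

private lemma edge_not_mem_path [DecidableEq V] {x z : V} (Q : G.Walk x z)
    (hQ : Q.IsPath) (hlen : 2 ≤ Q.length) : s(z, x) ∉ Q.edges := by
  cases Q with
  | nil => simp
  | @cons x w'' z r Q' =>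
    rw [Walk.cons_isPath_iff] at hQ
    obtain ⟨hQ', hxQ'⟩ := hQ
    simp only [Walk.edges_cons, List.mem_cons]
    rintro (heq | hmem)
    · rw [Sym2.eq_iff] at heq
      rcases heq with ⟨h1, h2⟩ | ⟨h1, h2⟩
      · subst h1
        exact hxQ' Q'.end_mem_support
      · subst h1
        have := (Walk.isPath_iff_eq_nil (p := Q')).mp hQ'
        subst this
        simp at hlen
    · exact hxQ' (Q'.snd_mem_support_of_mem_edges hmem)

end Aux

/-- If every cycle of `G` has length at most `c`, then every finite vertex set `s`
contains an independent set `I` with `s.card ≤ I.card * c`.  (Pósa-style covering: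
repeatedly remove the start of a longest path together with the prefix up to its
last neighbor, which spans a short cycle.) -/
private lemma cover_lemma {V : Type*} [Fintype V] [DecidableEq V] (G : SimpleGraph V)
    [DecidableRel G.Adj] (c : ℕ) (hc : 2 ≤ c)
    (hcyc : ∀ (v : V) (w : G.Walk v v), w.IsCycle → w.length ≤ c) :
    ∀ (n : ℕ) (s : Finset V), s.card ≤ n →
      ∃ I : Finset V, I ⊆ s ∧ (∀ a ∈ I, ∀ b ∈ I, ¬ G.Adj a b) ∧ s.card ≤ I.card * c := by
  intro n
  induction n with
  | zero =>
    intro s hs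
    exact ⟨∅, by simp, by simp, by simpa using hs⟩
  | succ n ih =>
    intro s hs
    rcases s.eq_empty_or_nonempty with rfl | hne
    · exact ⟨∅, by simp, by simp, by simp⟩
    -- a longest path with support inside s
    set L : Set ℕ := {m | ∃ (x y : V) (p : G.Walk x y), p.IsPath ∧
      (∀ a ∈ p.support, a ∈ s) ∧ p.length = m} with hL
    have hLne : L.Nonempty := by
      obtain ⟨v, hv⟩ := hne
      exact ⟨0, v, v, Walk.nil, by simp, by simpa using hv, rfl⟩
    have hLbdd : BddAbove L := by
      refine ⟨Fintype.card V, ?_⟩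
      rintro m ⟨x, y, p, hp, -, rfl⟩
      exact hp.length_lt.le
    obtain ⟨x, y, p, hp, hps, hplen⟩ := Nat.sSup_mem hLne hLbdd
    have hxs : x ∈ s := hps x p.start_mem_support
    have hmax : ∀ u, G.Adj x u → u ∈ s → u ∈ p.support := by
      intro u hadj hus
      by_contra hu
      have hpath : (Walk.cons (G.adj_symm hadj) p).IsPath := by
        rw [Walk.cons_isPath_iff]; exact ⟨hp, hu⟩
      have hmem : p.length + 1 ∈ L := by
        refine ⟨u, y, Walk.cons (G.adj_symm hadj) p, hpath, ?_, by simp⟩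
        intro a ha
        rw [Walk.support_cons, List.mem_cons] at ha
        rcases ha with rfl | ha
        · exact hus
        · exact hps a ha
      have := le_csSup hLbdd hmem
      omega
    set nbrs := s.filter (fun u => G.Adj x u) with hnbrs
    obtain ⟨U, hxU, hUs, hnbrsU, hUcard⟩ :
        ∃ U : Finset V, x ∈ U ∧ U ⊆ s ∧ (∀ u ∈ nbrs, u ∈ U) ∧ U.card ≤ c := by
      rcases nbrs.eq_empty_or_nonempty with he | hne'
      · exact ⟨{x}, by simp, by simpa using hxs, by simp [he], by rw [Finset.card_singleton]; omega⟩
      · obtain ⟨z, hz, hzN, hall⟩ := exists_last_prefix p hp nbrs hne'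
          (fun a ha => hmax a (Finset.mem_filter.mp ha).2 (Finset.mem_filter.mp ha).1)
        have hQpath : (p.takeUntil z hz).IsPath := hp.takeUntil hz
        have hadjxz : G.Adj x z := (Finset.mem_filter.mp hzN).2
        have hxz : x ≠ z := G.ne_of_adj hadjxz
        have hQlen : 1 ≤ (p.takeUntil z hz).length := by
          by_contra h0
          exact hxz (Walk.eq_of_length_eq_zero (p := p.takeUntil z hz) (by omega))
        have hQcard : (p.takeUntil z hz).support.toFinset.card
            = (p.takeUntil z hz).length + 1 := by
          rw [List.toFinset_card_of_nodup hQpath.support_nodup, Walk.length_support]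
        have hlen_le : (p.takeUntil z hz).length + 1 ≤ c := by
          rcases eq_or_lt_of_le hQlen with h1 | h2
          · omega
          · have hcyc' : (Walk.cons (G.adj_symm hadjxz) (p.takeUntil z hz)).IsCycle := by
              rw [Walk.cons_isCycle_iff]
              exact ⟨hQpath, edge_not_mem_path _ hQpath (by omega)⟩
            have := hcyc z _ hcyc'
            rw [Walk.length_cons] at this
            omega
        refine ⟨(p.takeUntil z hz).support.toFinset, ?_, ?_, ?_, by omega⟩
        · exact List.mem_toFinset.mpr (Walk.start_mem_support _)
        · intro a ha
          exact hps a (p.support_takeUntil_subset hz (List.mem_toFinset.mp ha))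
        · intro u hu
          exact List.mem_toFinset.mpr (hall u hu)
    set s' := s \ U with hs'
    have hUne : 1 ≤ U.card := Finset.card_pos.mpr ⟨x, hxU⟩
    have hUcard_le : U.card ≤ s.card := Finset.card_le_card hUs
    have hsplit : s'.card = s.card - U.card := Finset.card_sdiff_of_subset hUs
    have hcard' : s'.card ≤ n := by omega
    obtain ⟨I', hI's, hI'ind, hI'card⟩ := ih s' hcard'
    have hxI' : x ∉ I' := fun hxi => (Finset.mem_sdiff.mp (hI's hxi)).2 hxU
    refine ⟨insert x I', ?_, ?_, ?_⟩
    · intro a ha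
      rcases Finset.mem_insert.mp ha with rfl | h
      · exact hxs
      · exact (Finset.mem_sdiff.mp (hI's h)).1
    · intro a ha b hb
      rcases Finset.mem_insert.mp ha with rfl | ha' <;>
        rcases Finset.mem_insert.mp hb with rfl | hb'
      · exact fun h => G.irrefl h
      · intro hadj
        have hbs : b ∈ s := (Finset.mem_sdiff.mp (hI's hb')).1
        exact (Finset.mem_sdiff.mp (hI's hb')).2
          (hnbrsU b (Finset.mem_filter.mpr ⟨hbs, hadj⟩))
      · intro hadj
        have has : a ∈ s := (Finset.mem_sdiff.mp (hI's ha')).1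
        exact (Finset.mem_sdiff.mp (hI's ha')).2
          (hnbrsU a (Finset.mem_filter.mpr ⟨has, G.adj_symm hadj⟩))
      · exact hI'ind a ha' b hb'
    · have hins : (insert x I').card = I'.card + 1 :=
        Finset.card_insert_of_notMem hxI'
      have hmul : (insert x I').card * c = I'.card * c + c := by rw [hins]; ring
      omega

theorem kCyclable_edges_or_cycle {V : Type*} [Fintype V] [DecidableEq V]
    (G : SimpleGraph V) [DecidableRel G.Adj] (k n : ℕ) (hn : n = Fintype.card V)
    (hk : 2 ≤ k) (hcard : 2 * k ^ 2 ≤ n) (hG : KCyclable G k) :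
    ((2 * (k : ℚ) - 1) * ((n : ℚ) - 1) / 2 < (G.edgeFinset.card : ℚ) ∨
      ∃ (v : V) (w : G.Walk v v), w.IsCycle ∧ 2 * k ≤ w.length) ∧
    ((k : ℝ) ≤ Real.sqrt ((n : ℝ) / 2) →
      ∃ (v : V) (w : G.Walk v v), w.IsCycle ∧ 2 * k ≤ w.length) := by
  by_cases hex : ∃ (v : V) (w : G.Walk v v), w.IsCycle ∧ 2 * k ≤ w.length
  · exact ⟨Or.inr hex, fun _ => hex⟩
  exfalso
  push_neg at hex
  have hcyc : ∀ (v : V) (w : G.Walk v v), w.IsCycle → w.length ≤ 2 * k - 1 := by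
    intro v w hw
    have := hex v w hw
    omega
  -- no independent set of size k
  have hni : ∀ S : Finset V, (∀ a ∈ S, ∀ b ∈ S, ¬ G.Adj a b) → S.card ≠ k := by
    intro S hind hSk
    obtain ⟨v, w, hw, hsupp⟩ := hG S hSk
    have := indep_on_cycle_length hw S hind hsupp
    have := hex v w hw
    omega
  obtain ⟨I, -, hIind, hIcard⟩ := cover_lemma G (2 * k - 1) (by omega)
    hcyc ((Finset.univ : Finset V).card) (Finset.univ : Finset V) le_rfl
  have hIle : I.card ≤ k - 1 := by
    by_contra hcon
    push_neg at hcon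
    have hkI : k ≤ I.card := by omega
    obtain ⟨I', hI'sub, hI'card⟩ := Finset.exists_subset_card_eq hkI
    exact hni I' (fun a ha b hb => hIind a (hI'sub ha) b (hI'sub hb)) hI'card
  have huniv : (Finset.univ : Finset V).card = n := by rw [Finset.card_univ, hn]
  have h1 : I.card * (2 * k - 1) ≤ (k - 1) * (2 * k - 1) :=
    Nat.mul_le_mul_right _ hIle
  obtain ⟨j, rfl⟩ : ∃ j, k = j + 2 := ⟨k - 2, by omega⟩
  have h2 : (j + 2 - 1) * (2 * (j + 2) - 1) = (j + 1) * (2 * j + 3) := by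
    congr 1 <;> omega
  have h3 : (j + 1) * (2 * j + 3) < 2 * (j + 2) ^ 2 := by nlinarith
  rw [h2] at h1
  omega
end
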